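/- arXiv:1112.6363 — 5 statements merged into one kernel-verified Lean document; each statement's English description precedes it below -/
import Mathlib

section
/- Assume the GLM loss and condition (C) with constants M₁ > 0 and 0 < η* ≤ 1. Let φ₀(b) = M₂|b|₂ with M₂ > 0 and let φ be a seminorm on ℝ^p. Then F(ξ,S;φ₀,φ) ≥ F*(ξ,S;φ), where F*(ξ,S;φ) = inf{ n^{-1} Σ_{i=1}^n ψ̈₀(x^iβ*) · min( |x^i b| M₂/M₁, (x^i b)² ) / ((Σ_{j∈S}|b_j|) φ(b)) : b ∈ C(ξ,S), |b|₂ = 1 }. -/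
private lemma mvt_shift (d dd : ℝ → ℝ) (hd : ∀ t, HasDerivAt d (dd t) t) (a t : ℝ)
    (ht : t ≠ 0) : ∃ s : ℝ, |s| ≤ |t| ∧ d (a + t) - d a = dd (a + s) * t := by
  rcases ht.lt_or_gt with h | h
  · obtain ⟨c, hc, hceq⟩ := exists_hasDerivAt_eq_slope d dd (by linarith : a + t < a)
      (fun x _ => (hd x).continuousAt.continuousWithinAt) (fun x _ => hd x)
    obtain ⟨hc1, hc2⟩ := hc
    refine ⟨c - a, ?_, ?_⟩
    · rw [abs_of_neg (by linarith : c - a < 0), abs_of_neg h]; linarith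
    · have hne : a - (a + t) ≠ 0 := by intro h0; apply ht; linarith
      rw [eq_div_iff hne] at hceq
      rw [show a + (c - a) = c by ring]
      linear_combination hceq
  · obtain ⟨c, hc, hceq⟩ := exists_hasDerivAt_eq_slope d dd (by linarith : a < a + t)
      (fun x _ => (hd x).continuousAt.continuousWithinAt) (fun x _ => hd x)
    obtain ⟨hc1, hc2⟩ := hc
    refine ⟨c - a, ?_, ?_⟩
    · rw [abs_of_pos (by linarith : (0:ℝ) < c - a), abs_of_pos h]; linarith
    · have hne : a + t - a ≠ 0 := by intro h0; apply ht; linarith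
      rw [eq_div_iff hne] at hceq
      rw [show a + (c - a) = c by ring]
      linear_combination -hceq



private lemma aux1 (d dd : ℝ → ℝ) (hd : ∀ t, HasDerivAt d (dd t) t)
    (a M₁ η : ℝ) (hM₁ : 0 < M₁) (hdd0 : 0 < dd a)
    (hC : ∀ t : ℝ, M₁ * |t| ≤ η → 0 < dd (a + t) ∧ |Real.log (dd (a + t) / dd a)| ≤ M₁ * |t|)
    (t : ℝ) (ht : M₁ * |t| ≤ η) :
    dd a * t ^ 2 ≤ t * (d (a + t) - d a) * Real.exp (M₁ * |t|) := by
  rcases eq_or_ne t 0 with rfl | ht0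
  · simp
  obtain ⟨s, hs, heq⟩ := mvt_shift d dd hd a t ht0
  have hst : M₁ * |s| ≤ M₁ * |t| := mul_le_mul_of_nonneg_left hs hM₁.le
  obtain ⟨hpos, hlog⟩ := hC s (hst.trans ht)
  have hlogs : Real.log (dd (a + s) / dd a) = Real.log (dd (a + s)) - Real.log (dd a) :=
    Real.log_div hpos.ne' hdd0.ne'
  have h2 : Real.log (dd a) - Real.log (dd (a + s)) ≤ M₁ * |t| := by
    have h3 := (abs_le.1 hlog).1
    rw [hlogs] at h3
    linarith
  have h3 : dd a ≤ dd (a + s) * Real.exp (M₁ * |t|) := by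
    have h4 := Real.exp_le_exp.2 h2
    rw [Real.exp_sub, Real.exp_log hdd0, Real.exp_log hpos] at h4
    rw [div_le_iff₀ hpos] at h4
    nlinarith [Real.exp_pos (M₁ * |t|)]
  have ht2 : 0 < t ^ 2 := by positivity
  calc dd a * t ^ 2 ≤ (dd (a + s) * Real.exp (M₁ * |t|)) * t ^ 2 := by nlinarith
    _ = (dd (a + s) * t) * t * Real.exp (M₁ * |t|) := by ring
    _ = t * (d (a + t) - d a) * Real.exp (M₁ * |t|) := by rw [heq]; ring

private lemma key_scalar (d dd : ℝ → ℝ) (hd : ∀ t, HasDerivAt d (dd t) t)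
    (hmono : Monotone d)
    (a M₁ M₂ r η : ℝ) (hM₁ : 0 < M₁) (hM₂ : 0 < M₂) (hr : 0 < r)
    (hle : M₂ * r ≤ η) (hdd0 : 0 < dd a)
    (hC : ∀ t : ℝ, M₁ * |t| ≤ η → 0 < dd (a + t) ∧ |Real.log (dd (a + t) / dd a)| ≤ M₁ * |t|)
    (t : ℝ) :
    dd a * min (|t| * M₂ * r / M₁) (t ^ 2) ≤ t * (d (a + t) - d a) * Real.exp (M₂ * r) := by
  have hP : 0 ≤ t * (d (a + t) - d a) := by
    rcases le_or_gt 0 t with h | h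
    · exact mul_nonneg h (sub_nonneg.2 (hmono (by linarith)))
    · have h5 : d (a + t) ≤ d a := hmono (by linarith)
      nlinarith
  rcases le_or_gt (M₁ * |t|) (M₂ * r) with h | h
  · have h1 := aux1 d dd hd a M₁ η hM₁ hdd0 hC t (h.trans hle)
    have h2 : Real.exp (M₁ * |t|) ≤ Real.exp (M₂ * r) := Real.exp_le_exp.2 h
    calc dd a * min (|t| * M₂ * r / M₁) (t ^ 2) ≤ dd a * t ^ 2 :=
          mul_le_mul_of_nonneg_left (min_le_right _ _) hdd0.le
      _ ≤ t * (d (a + t) - d a) * Real.exp (M₁ * |t|) := h1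
      _ ≤ t * (d (a + t) - d a) * Real.exp (M₂ * r) :=
          mul_le_mul_of_nonneg_left h2 hP
  · have ht0 : t ≠ 0 := by
      intro h0; rw [h0, abs_zero, mul_zero] at h; nlinarith
    have habs : 0 < |t| := abs_pos.2 ht0
    set c : ℝ := M₂ * r / (M₁ * |t|) with hc
    have hc0 : 0 < c := div_pos (by positivity) (by positivity)
    have hc1 : c < 1 := (div_lt_one (by positivity)).2 h
    set τ : ℝ := c * t with hτ
    have hτabs : |τ| = M₂ * r / M₁ := by
      rw [hτ, abs_mul, abs_of_pos hc0, hc]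
      field_simp
    have hM₁τ : M₁ * |τ| = M₂ * r := by rw [hτabs]; field_simp
    have h1 := aux1 d dd hd a M₁ η hM₁ hdd0 hC τ (by rw [hM₁τ]; exact hle)
    rw [hM₁τ] at h1
    have h2 : t * (d (a + τ) - d a) ≤ t * (d (a + t) - d a) := by
      rcases lt_or_gt_of_ne ht0 with hneg | hpos2
      · have hle2 : a + t ≤ a + τ := by nlinarith
        have := hmono hle2
        nlinarith
      · have hle2 : a + τ ≤ a + t := by nlinarith
        have := hmono hle2
        nlinarith
    have hE : 0 < Real.exp (M₂ * r) := Real.exp_pos _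
    have hct2 : |t| * M₂ * r / M₁ = c * t ^ 2 := by
      rw [hc, div_mul_eq_mul_div, div_eq_div_iff (by positivity) (by positivity)]
      linear_combination (M₂ * r * M₁) * (sq_abs t)
    have key : dd a * (c * t ^ 2) ≤ t * (d (a + t) - d a) * Real.exp (M₂ * r) := by
      have h1' : c * (dd a * (c * t ^ 2)) ≤ c * (t * (d (a + τ) - d a) * Real.exp (M₂ * r)) := by
        calc c * (dd a * (c * t ^ 2)) = dd a * τ ^ 2 := by rw [hτ]; ring
          _ ≤ τ * (d (a + τ) - d a) * Real.exp (M₂ * r) := h1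
          _ = c * (t * (d (a + τ) - d a) * Real.exp (M₂ * r)) := by rw [hτ]; ring
      have h2' : c * (t * (d (a + τ) - d a) * Real.exp (M₂ * r)) ≤
          c * (t * (d (a + t) - d a) * Real.exp (M₂ * r)) := by
        apply mul_le_mul_of_nonneg_left _ hc0.le
        exact mul_le_mul_of_nonneg_right h2 hE.le
      exact le_of_mul_le_mul_left (h1'.trans h2') hc0
    calc dd a * min (|t| * M₂ * r / M₁) (t ^ 2) ≤ dd a * (|t| * M₂ * r / M₁) :=
          mul_le_mul_of_nonneg_left (min_le_left _ _) hdd0.le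
      _ = dd a * (c * t ^ 2) := by rw [hct2]
      _ ≤ t * (d (a + t) - d a) * Real.exp (M₂ * r) := key


private def setA' (n p : ℕ) (X : Fin n → Fin p → ℝ) (dψ₀ : ℝ → ℝ) (βs : Fin p → ℝ)
    (ηstar M₂ : ℝ) (S : Finset (Fin p)) (w : Fin p → ℝ) (ξ : ℝ)
    (φ : Seminorm ℝ (Fin p → ℝ)) : Set ℝ :=
  { r : ℝ | ∃ b : Fin p → ℝ,
        (∑ j ∈ Sᶜ, w j * |b j| ≤ ξ * ∑ j ∈ S, |b j|) ∧ (∑ j ∈ S, |b j| ≠ 0) ∧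
        M₂ * Real.sqrt (∑ j, b j ^ 2) ≤ ηstar ∧ (∑ j ∈ S, |b j|) * φ b ≠ 0 ∧
        r = (∑ j, b j * ((n : ℝ)⁻¹ * ∑ i, X i j * dψ₀ (∑ k, X i k * (βs k + b k)) -
                (n : ℝ)⁻¹ * ∑ i, X i j * dψ₀ (∑ k, X i k * βs k))) *
              Real.exp (M₂ * Real.sqrt (∑ j, b j ^ 2)) /
            ((∑ j ∈ S, |b j|) * φ b) }

private def setB' (n p : ℕ) (X : Fin n → Fin p → ℝ) (ddψ₀ : ℝ → ℝ) (βs : Fin p → ℝ)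
    (M₁ M₂ : ℝ) (S : Finset (Fin p)) (w : Fin p → ℝ) (ξ : ℝ)
    (φ : Seminorm ℝ (Fin p → ℝ)) : Set ℝ :=
  { r : ℝ | ∃ b : Fin p → ℝ,
        (∑ j ∈ Sᶜ, w j * |b j| ≤ ξ * ∑ j ∈ S, |b j|) ∧ (∑ j ∈ S, |b j| ≠ 0) ∧
        Real.sqrt (∑ j, b j ^ 2) = 1 ∧ (∑ j ∈ S, |b j|) * φ b ≠ 0 ∧
        r = (n : ℝ)⁻¹ * (∑ i, ddψ₀ (∑ k, X i k * βs k) *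
              min (|∑ k, X i k * b k| * M₂ / M₁) ((∑ k, X i k * b k) ^ 2)) /
            ((∑ j ∈ S, |b j|) * φ b) }



/-!
STATEMENT 4 (lower bound (GIF-2) for the generalized invertibility factor in GLM):
under condition (C), with φ₀(b) = M₂|b|₂ and φ a seminorm, F(ξ,S;φ₀,φ) ≥ F*(ξ,S;φ).
-/

theorem stmt_4 (n p : ℕ) (hn : 1 ≤ n) (hp : 1 ≤ p)
    (X : Fin n → Fin p → ℝ)
    (ψ₀ dψ₀ ddψ₀ : ℝ → ℝ)
    (hψ₀conv : ConvexOn ℝ Set.univ ψ₀)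
    (hd1 : ∀ t, HasDerivAt ψ₀ (dψ₀ t) t)
    (hd2 : ∀ t, HasDerivAt dψ₀ (ddψ₀ t) t)
    (βs : Fin p → ℝ)
    (M₁ ηstar : ℝ) (hM₁ : 0 < M₁) (hηstar0 : 0 < ηstar) (hηstar1 : ηstar ≤ 1)
    -- condition (C)
    (hC0 : ∀ i, 0 < ddψ₀ (∑ k, X i k * βs k))
    (hC : ∀ i, ∀ t : ℝ, M₁ * |t| ≤ ηstar →
        0 < ddψ₀ (∑ k, X i k * βs k + t) ∧
        |Real.log (ddψ₀ (∑ k, X i k * βs k + t) / ddψ₀ (∑ k, X i k * βs k))| ≤ M₁ * |t|)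
    (S : Finset (Fin p)) (hS : ∀ j, βs j ≠ 0 → j ∈ S)
    (w : Fin p → ℝ) (hw : ∀ j, 0 ≤ w j) (hwpos : ∀ j ∉ S, 0 < w j)
    (ξ : ℝ) (hξ : 0 < ξ) (M₂ : ℝ) (hM₂ : 0 < M₂)
    (φ : Seminorm ℝ (Fin p → ℝ)) :
    -- F(ξ,S;φ₀,φ) ≥ F*(ξ,S;φ)
    sInf { r : ℝ | ∃ b : Fin p → ℝ,
        (∑ j ∈ Sᶜ, w j * |b j| ≤ ξ * ∑ j ∈ S, |b j|) ∧ (∑ j ∈ S, |b j| ≠ 0) ∧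
        M₂ * Real.sqrt (∑ j, b j ^ 2) ≤ ηstar ∧ (∑ j ∈ S, |b j|) * φ b ≠ 0 ∧
        r = (∑ j, b j * ((n : ℝ)⁻¹ * ∑ i, X i j * dψ₀ (∑ k, X i k * (βs k + b k)) -
                (n : ℝ)⁻¹ * ∑ i, X i j * dψ₀ (∑ k, X i k * βs k))) *
              Real.exp (M₂ * Real.sqrt (∑ j, b j ^ 2)) /
            ((∑ j ∈ S, |b j|) * φ b) } ≥
    sInf { r : ℝ | ∃ b : Fin p → ℝ,
        (∑ j ∈ Sᶜ, w j * |b j| ≤ ξ * ∑ j ∈ S, |b j|) ∧ (∑ j ∈ S, |b j| ≠ 0) ∧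
        Real.sqrt (∑ j, b j ^ 2) = 1 ∧ (∑ j ∈ S, |b j|) * φ b ≠ 0 ∧
        r = (n : ℝ)⁻¹ * (∑ i, ddψ₀ (∑ k, X i k * βs k) *
              min (|∑ k, X i k * b k| * M₂ / M₁) ((∑ k, X i k * b k) ^ 2)) /
            ((∑ j ∈ S, |b j|) * φ b) } := by
  have _ := hn
  show sInf (setA' n p X dψ₀ βs ηstar M₂ S w ξ φ) ≥ sInf (setB' n p X ddψ₀ βs M₁ M₂ S w ξ φ)
  have hmono : Monotone dψ₀ := by
    have hder : ∀ x, deriv ψ₀ x = dψ₀ x := fun x => (hd1 x).deriv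
    have hm := hψ₀conv.monotoneOn_deriv (fun x _ => (hd1 x).differentiableAt)
    intro x y hxy
    have h := hm (Set.mem_univ x) (Set.mem_univ y) hxy
    rwa [hder, hder] at h
  have hBnonneg : ∀ y ∈ setB' n p X ddψ₀ βs M₁ M₂ S w ξ φ, (0:ℝ) ≤ y := by
    rintro y ⟨b, -, -, -, hden, rfl⟩
    apply div_nonneg
    · apply mul_nonneg (by positivity)
      apply Finset.sum_nonneg; intro i _
      exact mul_nonneg (hC0 i).le
        (le_min (div_nonneg (mul_nonneg (abs_nonneg _) hM₂.le) hM₁.le) (sq_nonneg _))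
    · exact mul_nonneg (Finset.sum_nonneg fun j _ => abs_nonneg _) (apply_nonneg φ b)
  have hBbdd : BddBelow (setB' n p X ddψ₀ βs M₁ M₂ S w ξ φ) := ⟨0, fun y hy => hBnonneg y hy⟩
  have main : ∀ b : Fin p → ℝ,
      (∑ j ∈ Sᶜ, w j * |b j| ≤ ξ * ∑ j ∈ S, |b j|) → (∑ j ∈ S, |b j| ≠ 0) →
      M₂ * Real.sqrt (∑ j, b j ^ 2) ≤ ηstar → ((∑ j ∈ S, |b j|) * φ b ≠ 0) →
      sInf (setB' n p X ddψ₀ βs M₁ M₂ S w ξ φ) ≤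
        (∑ j, b j * ((n : ℝ)⁻¹ * ∑ i, X i j * dψ₀ (∑ k, X i k * (βs k + b k)) -
                (n : ℝ)⁻¹ * ∑ i, X i j * dψ₀ (∑ k, X i k * βs k))) *
              Real.exp (M₂ * Real.sqrt (∑ j, b j ^ 2)) /
            ((∑ j ∈ S, |b j|) * φ b) := by
    intro b h1 h2 h3 h4
    set r : ℝ := Real.sqrt (∑ j, b j ^ 2) with hrdef
    have hex : ∃ j ∈ S, b j ≠ 0 := by
      by_contra hcon; push_neg at hcon
      exact h2 (Finset.sum_eq_zero fun j hj => by rw [hcon j hj, abs_zero])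
    have hsumsq : 0 < ∑ j, b j ^ 2 := by
      obtain ⟨j₀, hj₀S, hj₀⟩ := hex
      have hb2 : 0 < b j₀ ^ 2 := by positivity
      exact lt_of_lt_of_le hb2
        (Finset.single_le_sum (fun j _ => sq_nonneg (b j)) (Finset.mem_univ j₀))
    have hr : 0 < r := Real.sqrt_pos.2 hsumsq
    have hr2 : r ^ 2 = ∑ j, b j ^ 2 := Real.sq_sqrt hsumsq.le
    set u : Fin p → ℝ := r⁻¹ • b with hu
    have huj : ∀ j, u j = r⁻¹ * b j := fun j => rfl
    have hphiu : φ u = r⁻¹ * φ b := by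
      rw [hu, map_smul_eq_mul, Real.norm_eq_abs, abs_of_pos (inv_pos.2 hr)]
    have habsu : ∀ j, |u j| = r⁻¹ * |b j| := fun j => by
      rw [huj, abs_mul, abs_of_pos (inv_pos.2 hr)]
    have hsumS : ∑ j ∈ S, |u j| = r⁻¹ * ∑ j ∈ S, |b j| := by
      rw [Finset.mul_sum]; exact Finset.sum_congr rfl fun j _ => habsu j
    have htu : ∀ i, (∑ k, X i k * u k) = r⁻¹ * ∑ k, X i k * b k := fun i => by
      rw [Finset.mul_sum]; exact Finset.sum_congr rfl fun k _ => by rw [huj]; ring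
    have hsq1 : Real.sqrt (∑ j, u j ^ 2) = 1 := by
      have hsc : ∑ j, u j ^ 2 = (r⁻¹) ^ 2 * ∑ j, b j ^ 2 := by
        rw [Finset.mul_sum]; exact Finset.sum_congr rfl fun j _ => by rw [huj]; ring
      have h9 : (r⁻¹) ^ 2 * ∑ j, b j ^ 2 = 1 := by
        rw [← hr2]; field_simp
      rw [hsc, h9, Real.sqrt_one]
    -- membership of the scaled vector in setB'
    have hcone' : ∑ j ∈ Sᶜ, w j * |u j| ≤ ξ * ∑ j ∈ S, |u j| := by
      calc ∑ j ∈ Sᶜ, w j * |u j| = r⁻¹ * ∑ j ∈ Sᶜ, w j * |b j| := by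
            rw [Finset.mul_sum]; exact Finset.sum_congr rfl fun j _ => by rw [habsu]; ring
        _ ≤ r⁻¹ * (ξ * ∑ j ∈ S, |b j|) := by
            apply mul_le_mul_of_nonneg_left h1 (by positivity)
        _ = ξ * ∑ j ∈ S, |u j| := by rw [hsumS]; ring
    have h2' : ∑ j ∈ S, |u j| ≠ 0 := by
      rw [hsumS]; exact mul_ne_zero (inv_ne_zero hr.ne') h2
    have hden' : (∑ j ∈ S, |u j|) * φ u ≠ 0 := by
      rw [hsumS, hphiu, show (r⁻¹ * ∑ j ∈ S, |b j|) * (r⁻¹ * φ b)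
          = (r⁻¹ * r⁻¹) * ((∑ j ∈ S, |b j|) * φ b) by ring]
      exact mul_ne_zero (by positivity) h4
    have hmem : ((n : ℝ)⁻¹ * (∑ i, ddψ₀ (∑ k, X i k * βs k) *
              min (|∑ k, X i k * u k| * M₂ / M₁) ((∑ k, X i k * u k) ^ 2)) /
            ((∑ j ∈ S, |u j|) * φ u)) ∈ setB' n p X ddψ₀ βs M₁ M₂ S w ξ φ :=
      ⟨u, hcone', h2', hsq1, hden', rfl⟩
    refine le_trans (csInf_le hBbdd hmem) ?_
    -- now prove the value inequality
    have hD : 0 < (∑ j ∈ S, |b j|) * φ b :=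
      lt_of_le_of_ne
        (mul_nonneg (Finset.sum_nonneg fun j _ => abs_nonneg _) (apply_nonneg φ b)) (Ne.symm h4)
    have hAt : ∀ i, (∑ k, X i k * (βs k + b k))
        = (∑ k, X i k * βs k) + ∑ k, X i k * b k := fun i => by
      rw [← Finset.sum_add_distrib]; exact Finset.sum_congr rfl fun k _ => mul_add _ _ _
    have hsum : (∑ j, b j * ((n : ℝ)⁻¹ * ∑ i, X i j *
            dψ₀ ((∑ k, X i k * βs k) + ∑ k, X i k * b k) -
            (n : ℝ)⁻¹ * ∑ i, X i j * dψ₀ (∑ k, X i k * βs k)))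
        = (n : ℝ)⁻¹ * ∑ i, (∑ k, X i k * b k) *
            (dψ₀ ((∑ k, X i k * βs k) + ∑ k, X i k * b k) - dψ₀ (∑ k, X i k * βs k)) := by
      calc (∑ j, b j * ((n : ℝ)⁻¹ * ∑ i, X i j *
              dψ₀ ((∑ k, X i k * βs k) + ∑ k, X i k * b k) -
              (n : ℝ)⁻¹ * ∑ i, X i j * dψ₀ (∑ k, X i k * βs k)))
          = ∑ j, ∑ i, (n : ℝ)⁻¹ * (X i j * b j *
              (dψ₀ ((∑ k, X i k * βs k) + ∑ k, X i k * b k) - dψ₀ (∑ k, X i k * βs k))) := by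
            refine Finset.sum_congr rfl fun j _ => ?_
            rw [← mul_sub, ← Finset.sum_sub_distrib, Finset.mul_sum, Finset.mul_sum]
            refine Finset.sum_congr rfl fun i _ => by ring
        _ = ∑ i, ∑ j, (n : ℝ)⁻¹ * (X i j * b j *
              (dψ₀ ((∑ k, X i k * βs k) + ∑ k, X i k * b k) - dψ₀ (∑ k, X i k * βs k))) :=
            Finset.sum_comm
        _ = (n : ℝ)⁻¹ * ∑ i, (∑ k, X i k * b k) *
              (dψ₀ ((∑ k, X i k * βs k) + ∑ k, X i k * b k) - dψ₀ (∑ k, X i k * βs k)) := by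
            rw [Finset.mul_sum]
            refine Finset.sum_congr rfl fun i _ => ?_
            rw [← Finset.mul_sum, ← Finset.sum_mul]
    have hnum : (n : ℝ)⁻¹ * (∑ i, ddψ₀ (∑ k, X i k * βs k) *
            min (|∑ k, X i k * b k| * M₂ * r / M₁) ((∑ k, X i k * b k) ^ 2))
        ≤ ((n : ℝ)⁻¹ * ∑ i, (∑ k, X i k * b k) *
            (dψ₀ ((∑ k, X i k * βs k) + ∑ k, X i k * b k) - dψ₀ (∑ k, X i k * βs k))) *
            Real.exp (M₂ * r) := by
      rw [mul_assoc, Finset.sum_mul]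
      apply mul_le_mul_of_nonneg_left _ (by positivity : (0:ℝ) ≤ (n:ℝ)⁻¹)
      apply Finset.sum_le_sum
      intro i _
      exact key_scalar dψ₀ ddψ₀ hd2 hmono (∑ k, X i k * βs k) M₁ M₂ r ηstar hM₁ hM₂ hr h3
        (hC0 i) (hC i) (∑ k, X i k * b k)
    have hmin : ∀ i, min (|∑ k, X i k * u k| * M₂ / M₁) ((∑ k, X i k * u k) ^ 2)
        = (r⁻¹) ^ 2 * min (|∑ k, X i k * b k| * M₂ * r / M₁) ((∑ k, X i k * b k) ^ 2) := by
      intro i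
      rw [htu i, abs_mul, abs_of_pos (inv_pos.2 hr),
        mul_min_of_nonneg _ _ (by positivity : (0:ℝ) ≤ (r⁻¹) ^ 2)]
      congr 1
      · field_simp
      · ring
    have hy : ((n : ℝ)⁻¹ * (∑ i, ddψ₀ (∑ k, X i k * βs k) *
              min (|∑ k, X i k * u k| * M₂ / M₁) ((∑ k, X i k * u k) ^ 2)) /
            ((∑ j ∈ S, |u j|) * φ u))
        = (n : ℝ)⁻¹ * (∑ i, ddψ₀ (∑ k, X i k * βs k) *
              min (|∑ k, X i k * b k| * M₂ * r / M₁) ((∑ k, X i k * b k) ^ 2)) /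
            ((∑ j ∈ S, |b j|) * φ b) := by
      rw [hsumS, hphiu]
      simp_rw [hmin]
      rw [show (∑ i, ddψ₀ (∑ k, X i k * βs k) * ((r⁻¹) ^ 2 *
            min (|∑ k, X i k * b k| * M₂ * r / M₁) ((∑ k, X i k * b k) ^ 2)))
          = (r⁻¹) ^ 2 * ∑ i, ddψ₀ (∑ k, X i k * βs k) *
            min (|∑ k, X i k * b k| * M₂ * r / M₁) ((∑ k, X i k * b k) ^ 2) by
        rw [Finset.mul_sum]; exact Finset.sum_congr rfl fun i _ => by ring]
      rw [show (r⁻¹ * ∑ j ∈ S, |b j|) * (r⁻¹ * φ b)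
          = (r⁻¹) ^ 2 * ((∑ j ∈ S, |b j|) * φ b) by ring]
      rw [show (n : ℝ)⁻¹ * ((r⁻¹) ^ 2 * ∑ i, ddψ₀ (∑ k, X i k * βs k) *
            min (|∑ k, X i k * b k| * M₂ * r / M₁) ((∑ k, X i k * b k) ^ 2))
          = (r⁻¹) ^ 2 * ((n : ℝ)⁻¹ * ∑ i, ddψ₀ (∑ k, X i k * βs k) *
            min (|∑ k, X i k * b k| * M₂ * r / M₁) ((∑ k, X i k * b k) ^ 2)) by ring]
      rw [mul_div_mul_left _ _ (by positivity : ((r:ℝ)⁻¹) ^ 2 ≠ 0)]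
    rw [hy]
    simp_rw [hAt]
    rw [hsum]
    exact (div_le_div_iff_of_pos_right hD).2 hnum
  rcases Set.eq_empty_or_nonempty (setA' n p X dψ₀ βs ηstar M₂ S w ξ φ) with hAe | hAne
  · have hBe : setB' n p X ddψ₀ βs M₁ M₂ S w ξ φ = ∅ := by
      rw [Set.eq_empty_iff_forall_notMem]
      rintro y ⟨v, hcone, hsum0, hsq, hden, -⟩
      set ε : ℝ := ηstar / M₂ with hε
      have hε0 : 0 < ε := by positivity
      apply Set.eq_empty_iff_forall_notMem.1 hAe _
        (⟨ε • v, ?_, ?_, ?_, ?_, rfl⟩ :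
          _ ∈ setA' n p X dψ₀ βs ηstar M₂ S w ξ φ)
      · calc ∑ j ∈ Sᶜ, w j * |(ε • v) j| = ε * ∑ j ∈ Sᶜ, w j * |v j| := by
              rw [Finset.mul_sum]
              exact Finset.sum_congr rfl fun j _ => by
                show w j * |ε * v j| = ε * (w j * |v j|)
                rw [abs_mul, abs_of_pos hε0]; ring
          _ ≤ ε * (ξ * ∑ j ∈ S, |v j|) := mul_le_mul_of_nonneg_left hcone hε0.le
          _ = ξ * ∑ j ∈ S, |(ε • v) j| := by
              rw [show (∑ j ∈ S, |(ε • v) j|) = ε * ∑ j ∈ S, |v j| by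
                rw [Finset.mul_sum]
                exact Finset.sum_congr rfl fun j _ => by
                  show |ε * v j| = ε * |v j|
                  rw [abs_mul, abs_of_pos hε0]]
              ring
      · rw [show (∑ j ∈ S, |(ε • v) j|) = ε * ∑ j ∈ S, |v j| by
          rw [Finset.mul_sum]
          exact Finset.sum_congr rfl fun j _ => by
            show |ε * v j| = ε * |v j|
            rw [abs_mul, abs_of_pos hε0]]
        exact mul_ne_zero hε0.ne' hsum0
      · have hsq2 : (∑ j, ((ε • v) j) ^ 2) = ε ^ 2 * ∑ j, v j ^ 2 := by
          rw [Finset.mul_sum]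
          exact Finset.sum_congr rfl fun j _ => by
            show (ε * v j) ^ 2 = ε ^ 2 * v j ^ 2; ring
        rw [hsq2, Real.sqrt_mul (sq_nonneg ε), Real.sqrt_sq hε0.le, hsq, mul_one, hε]
        rw [mul_div_cancel₀ _ hM₂.ne']
      · rw [show (∑ j ∈ S, |(ε • v) j|) = ε * ∑ j ∈ S, |v j| by
          rw [Finset.mul_sum]
          exact Finset.sum_congr rfl fun j _ => by
            show |ε * v j| = ε * |v j|
            rw [abs_mul, abs_of_pos hε0]]
        rw [show φ (ε • v) = ε * φ v by
          rw [map_smul_eq_mul, Real.norm_eq_abs, abs_of_pos hε0]]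
        rw [show (ε * ∑ j ∈ S, |v j|) * (ε * φ v) = (ε * ε) * ((∑ j ∈ S, |v j|) * φ v) by ring]
        exact mul_ne_zero (by positivity) hden
    rw [hAe, hBe]
  · refine le_csInf hAne ?_
    rintro x ⟨b, h1, h2, h3, h4, rfl⟩
    exact main b h1 h2 h3 h4
end

section
/- Assume the GLM loss and condition (C) with constant M₁ ≥ 0 and η* = ∞ (i.e., the logarithmic bound on ψ̈₀ holds for all t ∈ ℝ). Then for every b ∈ ℝ^p: (i) e^{−M₁|Xb|_∞} ⟨b, Σ* b⟩ ≤ Δ(β* + b, β*) ≤ e^{M₁|Xb|_∞} ⟨b, Σ* b⟩, where |Xb|_∞ = max_i |x^i b|; and (ii) if ⟨b, Σ* b⟩ > 0 then, setting φ₀(b) = M₁ Σ_{i=1}^n ψ̈₀(x^iβ*)|x^i b|³ / Σ_{i=1}^n ψ̈₀(x^iβ*)(x^i b)², one has φ₀(b) ≤ M₁|Xb|_∞ and Δ(β* + b, β*) e^{φ₀(b)} ≥ ⟨b, Σ* b⟩. -/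
/-!
STATEMENT 5 ((phi_0-1)/(phi_0-2) for GLM with η* = ∞):
e^{−M₁|Xb|_∞}⟨b,Σ*b⟩ ≤ Δ(β*+b,β*) ≤ e^{M₁|Xb|_∞}⟨b,Σ*b⟩, and the Jensen-type bound
with φ₀(b) = M₁ Σᵢψ̈₀(x^iβ*)|x^ib|³ / Σᵢψ̈₀(x^iβ*)(x^ib)².
-/

-- key MVT lemma
lemma key_mvt (dψ₀ ddψ₀ : ℝ → ℝ) (hd2 : ∀ t, HasDerivAt dψ₀ (ddψ₀ t) t)
    (M₁ : ℝ) (hM₁ : 0 ≤ M₁) (s t : ℝ)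
    (hC0 : 0 < ddψ₀ s)
    (hC : ∀ u : ℝ, 0 < ddψ₀ (s + u) ∧
      |Real.log (ddψ₀ (s + u) / ddψ₀ s)| ≤ M₁ * |u|) :
    ddψ₀ s * t ^ 2 * Real.exp (-(M₁ * |t|)) ≤ t * (dψ₀ (s + t) - dψ₀ s) ∧
    t * (dψ₀ (s + t) - dψ₀ s) ≤ ddψ₀ s * t ^ 2 * Real.exp (M₁ * |t|) := by
  rcases eq_or_ne t 0 with h0 | h0
  · simp [h0]
  have hmvt : ∃ u : ℝ, |u| ≤ |t| ∧ dψ₀ (s + t) - dψ₀ s = ddψ₀ (s + u) * t := by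
    rcases h0.lt_or_gt with hneg | hpos
    · have hab : s + t < s := by linarith
      obtain ⟨c, hc, hceq⟩ := exists_hasDerivAt_eq_slope dψ₀ ddψ₀ hab
        (fun x _ => (hd2 x).continuousAt.continuousWithinAt) (fun x _ => hd2 x)
      refine ⟨c - s, ?_, ?_⟩
      · rw [abs_le, abs_of_neg hneg]
        constructor <;> [linarith [hc.1]; linarith [hc.2]]
      · have : ddψ₀ c = (dψ₀ s - dψ₀ (s + t)) / (s - (s + t)) := hceq
        have h2 : ddψ₀ c * (s - (s + t)) = dψ₀ s - dψ₀ (s + t) := by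
          rw [this, div_mul_cancel₀]
          intro h; rw [sub_eq_zero] at h; exact absurd h (by linarith)
        have : s + (c - s) = c := by ring
        rw [this]
        nlinarith [h2]
    · have hab : s < s + t := by linarith
      obtain ⟨c, hc, hceq⟩ := exists_hasDerivAt_eq_slope dψ₀ ddψ₀ hab
        (fun x _ => (hd2 x).continuousAt.continuousWithinAt) (fun x _ => hd2 x)
      refine ⟨c - s, ?_, ?_⟩
      · rw [abs_le, abs_of_pos hpos]
        constructor <;> [linarith [hc.1]; linarith [hc.2]]
      · have h2 : ddψ₀ c * (s + t - s) = dψ₀ (s + t) - dψ₀ s := by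
          rw [hceq, div_mul_cancel₀]
          intro h; rw [sub_eq_zero] at h; exact absurd h (by linarith)
        have : s + (c - s) = c := by ring
        rw [this]
        nlinarith [h2]
  obtain ⟨u, hu, heq⟩ := hmvt
  have hpos := (hC u).1
  have hlog := (hC u).2
  have hbound : M₁ * |u| ≤ M₁ * |t| := by
    apply mul_le_mul_of_nonneg_left hu hM₁
  have hlog' : |Real.log (ddψ₀ (s + u) / ddψ₀ s)| ≤ M₁ * |t| := le_trans hlog hbound
  rw [abs_le] at hlog'
  have hrpos : 0 < ddψ₀ (s + u) / ddψ₀ s := div_pos hpos hC0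
  have hub : ddψ₀ (s + u) ≤ ddψ₀ s * Real.exp (M₁ * |t|) := by
    have := Real.exp_le_exp.mpr hlog'.2
    rw [Real.exp_log hrpos] at this
    rw [div_le_iff₀ hC0] at this
    linarith [this]
  have hlb : ddψ₀ s * Real.exp (-(M₁ * |t|)) ≤ ddψ₀ (s + u) := by
    have := Real.exp_le_exp.mpr hlog'.1
    rw [Real.exp_log hrpos, le_div_iff₀ hC0] at this
    linarith
  rw [heq]
  have ht2 : (0:ℝ) ≤ t ^ 2 := sq_nonneg t
  constructor
  · calc ddψ₀ s * t ^ 2 * Real.exp (-(M₁ * |t|))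
        = (ddψ₀ s * Real.exp (-(M₁ * |t|))) * t ^ 2 := by ring
    _ ≤ ddψ₀ (s + u) * t ^ 2 := mul_le_mul_of_nonneg_right hlb ht2
    _ = t * (ddψ₀ (s + u) * t) := by ring
  · calc t * (ddψ₀ (s + u) * t) = ddψ₀ (s + u) * t ^ 2 := by ring
    _ ≤ (ddψ₀ s * Real.exp (M₁ * |t|)) * t ^ 2 := mul_le_mul_of_nonneg_right hub ht2
    _ = ddψ₀ s * t ^ 2 * Real.exp (M₁ * |t|) := by ring

theorem stmt_5 (n p : ℕ) (hn : 1 ≤ n) (hp : 1 ≤ p)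
    (X : Fin n → Fin p → ℝ)
    (ψ₀ dψ₀ ddψ₀ : ℝ → ℝ)
    (hψ₀conv : ConvexOn ℝ Set.univ ψ₀)
    (hd1 : ∀ t, HasDerivAt ψ₀ (dψ₀ t) t)
    (hd2 : ∀ t, HasDerivAt dψ₀ (ddψ₀ t) t)
    (βs : Fin p → ℝ)
    (M₁ : ℝ) (hM₁ : 0 ≤ M₁)
    -- condition (C) with η* = ∞
    (hC0 : ∀ i, 0 < ddψ₀ (∑ k, X i k * βs k))
    (hC : ∀ i, ∀ t : ℝ,
        0 < ddψ₀ (∑ k, X i k * βs k + t) ∧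
        |Real.log (ddψ₀ (∑ k, X i k * βs k + t) / ddψ₀ (∑ k, X i k * βs k))| ≤ M₁ * |t|) :
    ∀ b : Fin p → ℝ,
      -- (i) two-sided bound with M₁|Xb|_∞
      (Real.exp (-(M₁ * ⨆ i, |∑ k, X i k * b k|)) *
          ((n : ℝ)⁻¹ * ∑ i, ddψ₀ (∑ k, X i k * βs k) * (∑ k, X i k * b k) ^ 2) ≤
        ∑ j, b j * ((n : ℝ)⁻¹ * ∑ i, X i j * dψ₀ (∑ k, X i k * (βs k + b k)) -
              (n : ℝ)⁻¹ * ∑ i, X i j * dψ₀ (∑ k, X i k * βs k)) ∧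
       ∑ j, b j * ((n : ℝ)⁻¹ * ∑ i, X i j * dψ₀ (∑ k, X i k * (βs k + b k)) -
              (n : ℝ)⁻¹ * ∑ i, X i j * dψ₀ (∑ k, X i k * βs k)) ≤
        Real.exp (M₁ * ⨆ i, |∑ k, X i k * b k|) *
          ((n : ℝ)⁻¹ * ∑ i, ddψ₀ (∑ k, X i k * βs k) * (∑ k, X i k * b k) ^ 2)) ∧
      -- (ii) the Jensen-type bound for φ₀
      (0 < (n : ℝ)⁻¹ * ∑ i, ddψ₀ (∑ k, X i k * βs k) * (∑ k, X i k * b k) ^ 2 →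
        (M₁ * (∑ i, ddψ₀ (∑ k, X i k * βs k) * |∑ k, X i k * b k| ^ 3) /
            (∑ i, ddψ₀ (∑ k, X i k * βs k) * (∑ k, X i k * b k) ^ 2) ≤
          M₁ * ⨆ i, |∑ k, X i k * b k|) ∧
        (n : ℝ)⁻¹ * ∑ i, ddψ₀ (∑ k, X i k * βs k) * (∑ k, X i k * b k) ^ 2 ≤
          (∑ j, b j * ((n : ℝ)⁻¹ * ∑ i, X i j * dψ₀ (∑ k, X i k * (βs k + b k)) -
                (n : ℝ)⁻¹ * ∑ i, X i j * dψ₀ (∑ k, X i k * βs k))) *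
            Real.exp (M₁ * (∑ i, ddψ₀ (∑ k, X i k * βs k) * |∑ k, X i k * b k| ^ 3) /
              (∑ i, ddψ₀ (∑ k, X i k * βs k) * (∑ k, X i k * b k) ^ 2))) := by
  intro b
  haveI : Nonempty (Fin n) := Fin.pos_iff_nonempty.mp hn
  set s : Fin n → ℝ := fun i => ∑ k, X i k * βs k with hs_def
  set t : Fin n → ℝ := fun i => ∑ k, X i k * b k with ht_def
  have hs_eq : ∀ i, (∑ k, X i k * βs k) = s i := fun _ => rfl
  have ht_eq : ∀ i, (∑ k, X i k * b k) = t i := fun _ => rfl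
  have harg : ∀ i, (∑ k, X i k * (βs k + b k)) = s i + t i := by
    intro i
    simp only [hs_def, ht_def, mul_add, Finset.sum_add_distrib]
  simp only [harg, hs_eq, ht_eq]
  set L : ℝ := ⨆ i, |t i| with hL_def
  have hL : ∀ i, |t i| ≤ L := fun i =>
    le_ciSup (f := fun i => |t i|) (Set.Finite.bddAbove (Set.finite_range _)) i
  have hL0 : 0 ≤ L := le_trans (abs_nonneg _) (hL (Classical.arbitrary _))
  have key : ∀ i : Fin n,
      ddψ₀ (s i) * t i ^ 2 * Real.exp (-(M₁ * |t i|)) ≤ t i * (dψ₀ (s i + t i) - dψ₀ (s i)) ∧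
      t i * (dψ₀ (s i + t i) - dψ₀ (s i)) ≤ ddψ₀ (s i) * t i ^ 2 * Real.exp (M₁ * |t i|) :=
    fun i => key_mvt dψ₀ ddψ₀ hd2 M₁ hM₁ (s i) (t i) (hC0 i) (hC i)
  have hC0' : ∀ i, 0 < ddψ₀ (s i) := hC0
  have hΔ : (∑ j, b j * ((n : ℝ)⁻¹ * ∑ i, X i j * dψ₀ (s i + t i) -
              (n : ℝ)⁻¹ * ∑ i, X i j * dψ₀ (s i)))
      = (n : ℝ)⁻¹ * ∑ i, t i * (dψ₀ (s i + t i) - dψ₀ (s i)) := by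
    rw [Finset.mul_sum]
    have step1 : ∀ j, b j * ((n : ℝ)⁻¹ * ∑ i, X i j * dψ₀ (s i + t i) -
              (n : ℝ)⁻¹ * ∑ i, X i j * dψ₀ (s i))
        = ∑ i, (n : ℝ)⁻¹ * (X i j * b j * (dψ₀ (s i + t i) - dψ₀ (s i))) := by
      intro j
      rw [← mul_sub, ← Finset.sum_sub_distrib, Finset.mul_sum, Finset.mul_sum]
      exact Finset.sum_congr rfl fun i _ => by ring
    simp only [step1]
    rw [Finset.sum_comm]
    refine Finset.sum_congr rfl fun i _ => ?_
    rw [← Finset.mul_sum, ← Finset.sum_mul]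
  have hterm_nonneg : ∀ i : Fin n, (0:ℝ) ≤ ddψ₀ (s i) * t i ^ 2 :=
    fun i => mul_nonneg (hC0' i).le (sq_nonneg _)
  have hninv : (0:ℝ) < (n : ℝ)⁻¹ := by positivity
  rw [hΔ]
  constructor
  · constructor
    · have e1 : Real.exp (-(M₁ * L)) * ((n:ℝ)⁻¹ * ∑ i, ddψ₀ (s i) * t i ^ 2)
          = (n:ℝ)⁻¹ * ∑ i, Real.exp (-(M₁ * L)) * (ddψ₀ (s i) * t i ^ 2) := by
        rw [← Finset.mul_sum]; ring
      rw [e1]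
      apply mul_le_mul_of_nonneg_left _ hninv.le
      apply Finset.sum_le_sum
      intro i _
      calc Real.exp (-(M₁ * L)) * (ddψ₀ (s i) * t i ^ 2)
          ≤ Real.exp (-(M₁ * |t i|)) * (ddψ₀ (s i) * t i ^ 2) := by
            apply mul_le_mul_of_nonneg_right _ (hterm_nonneg i)
            apply Real.exp_le_exp.mpr
            simp only [neg_le_neg_iff]
            exact mul_le_mul_of_nonneg_left (hL i) hM₁
        _ = ddψ₀ (s i) * t i ^ 2 * Real.exp (-(M₁ * |t i|)) := by ring
        _ ≤ t i * (dψ₀ (s i + t i) - dψ₀ (s i)) := (key i).1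
    · have e1 : Real.exp (M₁ * L) * ((n:ℝ)⁻¹ * ∑ i, ddψ₀ (s i) * t i ^ 2)
          = (n:ℝ)⁻¹ * ∑ i, Real.exp (M₁ * L) * (ddψ₀ (s i) * t i ^ 2) := by
        rw [← Finset.mul_sum]; ring
      rw [e1]
      apply mul_le_mul_of_nonneg_left _ hninv.le
      apply Finset.sum_le_sum
      intro i _
      calc t i * (dψ₀ (s i + t i) - dψ₀ (s i))
          ≤ ddψ₀ (s i) * t i ^ 2 * Real.exp (M₁ * |t i|) := (key i).2
        _ ≤ ddψ₀ (s i) * t i ^ 2 * Real.exp (M₁ * L) := by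
            apply mul_le_mul_of_nonneg_left _ (hterm_nonneg i)
            exact Real.exp_le_exp.mpr (mul_le_mul_of_nonneg_left (hL i) hM₁)
        _ = Real.exp (M₁ * L) * (ddψ₀ (s i) * t i ^ 2) := by ring
  · intro hQpos
    set Q : ℝ := ∑ i, ddψ₀ (s i) * t i ^ 2 with hQ_def
    have hQ : 0 < Q := by
      by_contra h
      push_neg at h
      nlinarith [mul_nonneg hninv.le (neg_nonneg.mpr h)]
    set S₃ : ℝ := ∑ i, ddψ₀ (s i) * |t i| ^ 3 with hS3_def
    have habs3 : ∀ i : Fin n, |t i| ^ 3 = |t i| * t i ^ 2 := by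
      intro i; rw [← sq_abs]; ring
    have hS3L : S₃ ≤ L * Q := by
      rw [hQ_def, hS3_def, Finset.mul_sum]
      apply Finset.sum_le_sum
      intro i _
      rw [habs3 i]
      calc ddψ₀ (s i) * (|t i| * t i ^ 2) = |t i| * (ddψ₀ (s i) * t i ^ 2) := by ring
        _ ≤ L * (ddψ₀ (s i) * t i ^ 2) := mul_le_mul_of_nonneg_right (hL i) (hterm_nonneg i)
    constructor
    · rw [div_le_iff₀ hQ]
      calc M₁ * S₃ ≤ M₁ * (L * Q) := mul_le_mul_of_nonneg_left hS3L hM₁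
        _ = M₁ * L * Q := by ring
    · set φ : ℝ := M₁ * S₃ / Q with hφ_def
      have hw_nonneg : ∀ i ∈ Finset.univ, (0:ℝ) ≤ ddψ₀ (s i) * t i ^ 2 / Q :=
        fun i _ => div_nonneg (hterm_nonneg i) hQ.le
      have hw_sum : ∑ i, ddψ₀ (s i) * t i ^ 2 / Q = 1 := by
        rw [← Finset.sum_div, div_self hQ.ne']
      have hjensen := convexOn_exp.map_sum_le (t := Finset.univ)
        (w := fun i => ddψ₀ (s i) * t i ^ 2 / Q)
        (p := fun i => -(M₁ * |t i|)) hw_nonneg hw_sum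
        (fun i _ => Set.mem_univ _)
      have hcenter : (∑ i, (ddψ₀ (s i) * t i ^ 2 / Q) • (-(M₁ * |t i|))) = -φ := by
        have h3 : ∀ i ∈ (Finset.univ : Finset (Fin n)),
            (ddψ₀ (s i) * t i ^ 2 / Q) • (-(M₁ * |t i|))
              = -(M₁ * (ddψ₀ (s i) * |t i| ^ 3) / Q) := by
          intro i _
          rw [smul_eq_mul, habs3 i]
          ring
        rw [Finset.sum_congr rfl h3, Finset.sum_neg_distrib, ← Finset.sum_div,
          ← Finset.mul_sum, hφ_def, hS3_def]
      rw [hcenter] at hjensen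
      have hmain : (n:ℝ)⁻¹ * Q * Real.exp (-φ) ≤
          (n:ℝ)⁻¹ * ∑ i, t i * (dψ₀ (s i + t i) - dψ₀ (s i)) := by
        have h1 : Q * Real.exp (-φ) ≤ ∑ i, ddψ₀ (s i) * t i ^ 2 * Real.exp (-(M₁ * |t i|)) := by
          calc Q * Real.exp (-φ)
              ≤ Q * ∑ i, (ddψ₀ (s i) * t i ^ 2 / Q) • Real.exp (-(M₁ * |t i|)) :=
                mul_le_mul_of_nonneg_left hjensen hQ.le
            _ = ∑ i, ddψ₀ (s i) * t i ^ 2 * Real.exp (-(M₁ * |t i|)) := by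
                rw [Finset.mul_sum]
                refine Finset.sum_congr rfl fun i _ => ?_
                rw [smul_eq_mul]
                field_simp
        have h2 : ∑ i, ddψ₀ (s i) * t i ^ 2 * Real.exp (-(M₁ * |t i|)) ≤
            ∑ i, t i * (dψ₀ (s i + t i) - dψ₀ (s i)) :=
          Finset.sum_le_sum fun i _ => (key i).1
        rw [mul_assoc]
        exact mul_le_mul_of_nonneg_left (le_trans h1 h2) hninv.le
      calc (n:ℝ)⁻¹ * Q = ((n:ℝ)⁻¹ * Q * Real.exp (-φ)) * Real.exp φ := by
            rw [mul_assoc, ← Real.exp_add, neg_add_cancel, Real.exp_zero, mul_one]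
        _ ≤ ((n:ℝ)⁻¹ * ∑ i, t i * (dψ₀ (s i + t i) - dψ₀ (s i))) * Real.exp φ :=
            mul_le_mul_of_nonneg_right hmain (Real.exp_pos _).le
end

section
/- Assume the GLM loss and the GLM probability model. Then for every b ∈ ℝ^p, E exp( (n/σ²) ⟨b, z − ψ̇(β*)⟩ ) = exp( σ^{-2} Σ_{i=1}^n [ ψ₀(x^i(β* + b)) − ψ₀(x^iβ*) − (x^i b) ψ̇₀(x^iβ*) ] ). Consequently, if condition (C) holds with constants M₁ ≥ 0, 0 < η* ≤ ∞, and if M₁ |Xb|_∞ ≤ η₀ for some 0 < η₀ ≤ η*, then E exp( (n/σ²) ⟨b, z − ψ̇(β*)⟩ ) ≤ exp( n e^{η₀} ⟨b, Σ* b⟩ / (2σ²) ). -/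
open MeasureTheory ProbabilityTheory

open scoped ENNReal NNReal

lemma taylor_aux (g dg ddg : ℝ → ℝ)
    (hd1 : ∀ t, HasDerivAt g (dg t) t) (hd2 : ∀ t, HasDerivAt dg (ddg t) t)
    (θ s K : ℝ) (hK : ∀ u : ℝ, |u| ≤ |s| → ddg (θ + u) ≤ K) :
    g (θ + s) - g θ - s * dg θ ≤ K * s ^ 2 / 2 := by
  set h : ℝ → ℝ := fun u => g (θ + u) - g θ - u * dg θ - K * u ^ 2 / 2 with hh
  set h' : ℝ → ℝ := fun u => dg (θ + u) - dg θ - K * u with hh'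
  have hd : ∀ u, HasDerivAt h (h' u) u := by
    intro u
    have h1 : HasDerivAt (fun u : ℝ => g (θ + u)) (dg (θ + u)) u := by
      simpa [Function.comp_def] using (hd1 (θ + u)).comp u ((hasDerivAt_id u).const_add θ)
    have h2 : HasDerivAt (fun u : ℝ => u * dg θ) (dg θ) u := by
      simpa using (hasDerivAt_id u).mul_const (dg θ)
    have h3 : HasDerivAt (fun u : ℝ => K * u ^ 2 / 2) (K * u) u := by
      have := ((hasDerivAt_pow 2 u).const_mul K).div_const 2
      refine this.congr_deriv ?_
      push_cast; ring
    exact ((h1.sub_const (g θ)).sub h2).sub h3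
  have hd' : ∀ u, HasDerivAt h' (ddg (θ + u) - K) u := by
    intro u
    have h1 : HasDerivAt (fun u : ℝ => dg (θ + u)) (ddg (θ + u)) u := by
      simpa [Function.comp_def] using (hd2 (θ + u)).comp u ((hasDerivAt_id u).const_add θ)
    have h2 : HasDerivAt (fun u : ℝ => K * u) K u := by
      simpa using (hasDerivAt_id u).const_mul K
    exact (h1.sub_const (dg θ)).sub h2
  have h0 : h 0 = 0 := by simp [hh]
  have h'0 : h' 0 = 0 := by simp [hh']
  have hgoal : h s ≤ 0 → g (θ + s) - g θ - s * dg θ ≤ K * s ^ 2 / 2 := by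
    intro hs; simp only [hh] at hs; linarith
  apply hgoal
  rcases le_or_gt 0 s with hs | hs
  · have hanti' : AntitoneOn h' (Set.Icc 0 s) := by
      apply antitoneOn_of_deriv_nonpos (convex_Icc 0 s)
      · exact fun u _ => (hd' u).differentiableAt.continuousAt.continuousWithinAt
      · exact fun u _ => (hd' u).differentiableAt.differentiableWithinAt
      · intro u hu
        rw [interior_Icc] at hu
        rw [(hd' u).deriv]
        have habs : |u| ≤ |s| := by
          rw [abs_of_pos hu.1, abs_of_nonneg hs]; exact hu.2.le
        linarith [hK u habs]
    have hnp : ∀ u ∈ Set.Icc (0:ℝ) s, h' u ≤ 0 := by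
      intro u hu
      have := hanti' (Set.left_mem_Icc.2 hs) hu hu.1
      rwa [h'0] at this
    have hanti : AntitoneOn h (Set.Icc 0 s) := by
      apply antitoneOn_of_deriv_nonpos (convex_Icc 0 s)
      · exact fun u _ => (hd u).differentiableAt.continuousAt.continuousWithinAt
      · exact fun u _ => (hd u).differentiableAt.differentiableWithinAt
      · intro u hu
        rw [interior_Icc] at hu
        rw [(hd u).deriv]
        exact hnp u ⟨hu.1.le, hu.2.le⟩
    have := hanti (Set.left_mem_Icc.2 hs) (Set.right_mem_Icc.2 hs) hs
    rwa [h0] at this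
  · have hanti' : AntitoneOn h' (Set.Icc s 0) := by
      apply antitoneOn_of_deriv_nonpos (convex_Icc s 0)
      · exact fun u _ => (hd' u).differentiableAt.continuousAt.continuousWithinAt
      · exact fun u _ => (hd' u).differentiableAt.differentiableWithinAt
      · intro u hu
        rw [interior_Icc] at hu
        rw [(hd' u).deriv]
        have habs : |u| ≤ |s| := by
          rw [abs_of_neg hu.2, abs_of_neg hs]; linarith [hu.1]
        linarith [hK u habs]
    have hnn : ∀ u ∈ Set.Icc s (0:ℝ), 0 ≤ h' u := by
      intro u hu
      have := hanti' hu (Set.right_mem_Icc.2 hs.le) hu.2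
      rwa [h'0] at this
    have hmono : MonotoneOn h (Set.Icc s 0) := by
      apply monotoneOn_of_deriv_nonneg (convex_Icc s 0)
      · exact fun u _ => (hd u).differentiableAt.continuousAt.continuousWithinAt
      · exact fun u _ => (hd u).differentiableAt.differentiableWithinAt
      · intro u hu
        rw [interior_Icc] at hu
        rw [(hd u).deriv]
        exact hnn u ⟨hu.1.le, hu.2.le⟩
    have := hmono (Set.left_mem_Icc.2 hs.le) (Set.right_mem_Icc.2 hs.le) hs.le
    rwa [h0] at this

lemma onedim_mgf (ψ₀ : ℝ → ℝ) (σ : ℝ) (hσ : 0 < σ) (cc : ℝ → ℝ) (hcc : Measurable cc)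
    (ν : Measure ℝ) [SigmaFinite ν]
    (hnorm : ∀ θ : ℝ, ∫ v, Real.exp ((θ * v - ψ₀ θ) / σ ^ 2 + cc v / σ ^ 2) ∂ν = 1)
    (θ s d : ℝ) :
    ∫ v, Real.exp ((s / σ ^ 2) * (v - d))
        ∂(ν.withDensity fun v =>
            ENNReal.ofReal (Real.exp ((θ * v - ψ₀ θ) / σ ^ 2 + cc v / σ ^ 2)))
      = Real.exp ((ψ₀ (θ + s) - ψ₀ θ - s * d) / σ ^ 2) := by
  have hσ2 : (σ:ℝ) ^ 2 ≠ 0 := by positivity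
  have hmg : Measurable fun v => (Real.exp ((θ * v - ψ₀ θ) / σ ^ 2 + cc v / σ ^ 2)).toNNReal := by
    fun_prop
  rw [show (fun v => ENNReal.ofReal (Real.exp ((θ * v - ψ₀ θ) / σ ^ 2 + cc v / σ ^ 2)))
      = (fun v => ((Real.exp ((θ * v - ψ₀ θ) / σ ^ 2 + cc v / σ ^ 2)).toNNReal : ℝ≥0∞))
      from rfl]
  rw [integral_withDensity_eq_integral_smul hmg]
  have hpt : ∀ v : ℝ,
      (Real.exp ((θ * v - ψ₀ θ) / σ ^ 2 + cc v / σ ^ 2)).toNNReal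
          • Real.exp ((s / σ ^ 2) * (v - d))
        = Real.exp ((ψ₀ (θ + s) - ψ₀ θ - s * d) / σ ^ 2) *
            Real.exp (((θ + s) * v - ψ₀ (θ + s)) / σ ^ 2 + cc v / σ ^ 2) := by
    intro v
    rw [NNReal.smul_def, Real.coe_toNNReal _ (Real.exp_nonneg _), smul_eq_mul, ← Real.exp_add, ← Real.exp_add]
    congr 1
    field_simp
    ring
  simp_rw [hpt]
  rw [integral_const_mul, hnorm (θ + s), mul_one]


/-!
STATEMENT 6 (moment generating identity (pf-lm-2-1)/(pf-lm-2-2) in GLM):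
E exp((n/σ²)⟨b, z − ψ̇(β*)⟩) = exp(σ^{-2} Σᵢ [ψ₀(x^i(β*+b)) − ψ₀(x^iβ*) − (x^ib)ψ̇₀(x^iβ*)]),
and the sub-Gaussian bound under condition (C) when M₁|Xb|_∞ ≤ η₀ ≤ η*.
-/

theorem stmt_6 (n p : ℕ) (hn : 1 ≤ n) (hp : 1 ≤ p)
    (X : Fin n → Fin p → ℝ)
    (ψ₀ dψ₀ ddψ₀ : ℝ → ℝ)
    (hψ₀conv : ConvexOn ℝ Set.univ ψ₀)
    (hd1 : ∀ t, HasDerivAt ψ₀ (dψ₀ t) t)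
    (hd2 : ∀ t, HasDerivAt dψ₀ (ddψ₀ t) t)
    (βs : Fin p → ℝ)
    (σ : ℝ) (hσ : 0 < σ)
    (cc : ℝ → ℝ) (hcc : Measurable cc)
    (ν : Measure ℝ) [SigmaFinite ν]
    -- the GLM density integrates to one for every natural parameter θ
    (hnorm : ∀ θ : ℝ,
        ∫ v, Real.exp ((θ * v - ψ₀ θ) / σ ^ 2 + cc v / σ ^ 2) ∂ν = 1)
    (Ω : Type) (mΩ : MeasurableSpace Ω) (P : Measure Ω) [IsProbabilityMeasure P]
    (y : Ω → Fin n → ℝ) (hmeas : ∀ i, Measurable fun ω => y ω i)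
    (hindep : iIndepFun (fun i ω => y ω i) P)
    (hlaw : ∀ i, Measure.map (fun ω => y ω i) P =
        ν.withDensity (fun v => ENNReal.ofReal (Real.exp
          (((∑ k, X i k * βs k) * v - ψ₀ (∑ k, X i k * βs k)) / σ ^ 2 + cc v / σ ^ 2)))) :
    -- (i) the exact moment generating identity, with z = X'y/n
    (∀ b : Fin p → ℝ,
      ∫ ω, Real.exp (((n : ℝ) / σ ^ 2) *
          ∑ j, b j * ((n : ℝ)⁻¹ * ∑ i, X i j * y ω i -
            (n : ℝ)⁻¹ * ∑ i, X i j * dψ₀ (∑ k, X i k * βs k))) ∂P =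
      Real.exp ((1 / σ ^ 2) * ∑ i,
        (ψ₀ (∑ k, X i k * (βs k + b k)) - ψ₀ (∑ k, X i k * βs k) -
          (∑ k, X i k * b k) * dψ₀ (∑ k, X i k * βs k)))) ∧
    -- (ii) consequently, under condition (C) with M₁ ≥ 0 and 0 < η* ≤ ∞
    (∀ (M₁ : ℝ) (ηstar : EReal), 0 ≤ M₁ → 0 < ηstar →
      (∀ i, 0 < ddψ₀ (∑ k, X i k * βs k)) →
      (∀ i, ∀ t : ℝ, ((M₁ * |t| : ℝ) : EReal) ≤ ηstar →
        0 < ddψ₀ (∑ k, X i k * βs k + t) ∧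
        |Real.log (ddψ₀ (∑ k, X i k * βs k + t) / ddψ₀ (∑ k, X i k * βs k))| ≤ M₁ * |t|) →
      ∀ (b : Fin p → ℝ) (η₀ : ℝ), 0 < η₀ → ((η₀ : ℝ) : EReal) ≤ ηstar →
        M₁ * (⨆ i, |∑ k, X i k * b k|) ≤ η₀ →
        ∫ ω, Real.exp (((n : ℝ) / σ ^ 2) *
            ∑ j, b j * ((n : ℝ)⁻¹ * ∑ i, X i j * y ω i -
              (n : ℝ)⁻¹ * ∑ i, X i j * dψ₀ (∑ k, X i k * βs k))) ∂P ≤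
        Real.exp ((n : ℝ) * Real.exp η₀ *
            ((n : ℝ)⁻¹ * ∑ i, ddψ₀ (∑ k, X i k * βs k) * (∑ k, X i k * b k) ^ 2) /
          (2 * σ ^ 2))) := by
  
  have hσ2 : (σ:ℝ) ^ 2 ≠ 0 := by positivity
  have hn0 : (n:ℝ) ≠ 0 := by
    have : 0 < n := hn
    positivity
  have hmain : ∀ b : Fin p → ℝ,
      ∫ ω, Real.exp (((n : ℝ) / σ ^ 2) *
          ∑ j, b j * ((n : ℝ)⁻¹ * ∑ i, X i j * y ω i -
            (n : ℝ)⁻¹ * ∑ i, X i j * dψ₀ (∑ k, X i k * βs k))) ∂P =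
      Real.exp ((1 / σ ^ 2) * ∑ i,
        (ψ₀ (∑ k, X i k * (βs k + b k)) - ψ₀ (∑ k, X i k * βs k) -
          (∑ k, X i k * b k) * dψ₀ (∑ k, X i k * βs k))) := by
    intro b
    set θf : Fin n → ℝ := fun i => ∑ k, X i k * βs k with hθf
    set sf : Fin n → ℝ := fun i => ∑ k, X i k * b k with hsf
    set V : Fin n → Ω → ℝ := fun i ω => (sf i / σ ^ 2) * (y ω i - dψ₀ (θf i)) with hV
    have hexp : ∀ ω, ((n:ℝ) / σ ^ 2) *
        ∑ j, b j * ((n:ℝ)⁻¹ * ∑ i, X i j * y ω i - (n:ℝ)⁻¹ * ∑ i, X i j * dψ₀ (θf i))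
        = 1 * (∑ i, V i) ω := by
      intro ω
      rw [one_mul]
      simp only [Finset.sum_apply]
      calc ((n:ℝ) / σ ^ 2) *
          ∑ j, b j * ((n:ℝ)⁻¹ * ∑ i, X i j * y ω i - (n:ℝ)⁻¹ * ∑ i, X i j * dψ₀ (θf i))
          = ∑ j, ∑ i, ((n:ℝ) / σ ^ 2) *
              (b j * ((n:ℝ)⁻¹ * (X i j * y ω i - X i j * dψ₀ (θf i)))) := by
            rw [Finset.mul_sum]
            refine Finset.sum_congr rfl fun j _ => ?_
            rw [← mul_sub, ← Finset.sum_sub_distrib]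
            simp only [Finset.mul_sum]
        _ = ∑ i, ∑ j, ((n:ℝ) / σ ^ 2) *
              (b j * ((n:ℝ)⁻¹ * (X i j * y ω i - X i j * dψ₀ (θf i)))) := Finset.sum_comm
        _ = ∑ i, V i ω := by
            refine Finset.sum_congr rfl fun i _ => ?_
            simp only [hV, hsf, Finset.sum_div, Finset.sum_mul]
            refine Finset.sum_congr rfl fun j _ => ?_
            field_simp
    have hVmeas : ∀ i, Measurable (V i) := fun i => ((hmeas i).sub measurable_const).const_mul _
    have hVindep : iIndepFun V P := by
      exact hindep.comp (fun i x => (sf i / σ ^ 2) * (x - dψ₀ (θf i))) (fun i => by fun_prop)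
    have hint : ∫ ω, Real.exp (((n : ℝ) / σ ^ 2) *
          ∑ j, b j * ((n : ℝ)⁻¹ * ∑ i, X i j * y ω i -
            (n : ℝ)⁻¹ * ∑ i, X i j * dψ₀ (θf i))) ∂P = mgf (∑ i, V i) P 1 := by
      rw [mgf]
      congr 1
      funext ω
      rw [hexp ω]
    rw [hint, hVindep.mgf_sum hVmeas]
    have hfac : ∀ i : Fin n, mgf (V i) P 1
        = Real.exp ((ψ₀ (θf i + sf i) - ψ₀ (θf i) - sf i * dψ₀ (θf i)) / σ ^ 2) := by
      intro i
      rw [mgf]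
      have hfm : Measurable fun v : ℝ =>
          Real.exp (1 * ((sf i / σ ^ 2) * (v - dψ₀ (θf i)))) := by fun_prop
      have hmap : ∫ ω, Real.exp (1 * V i ω) ∂P
          = ∫ v, Real.exp (1 * ((sf i / σ ^ 2) * (v - dψ₀ (θf i))))
              ∂(Measure.map (fun ω => y ω i) P) :=
        (integral_map (hmeas i).aemeasurable hfm.aestronglyMeasurable).symm
      rw [show (fun ω => Real.exp (1 * V i ω)) = fun ω => Real.exp (1 * V i ω) from rfl]
      rw [hmap, hlaw i]
      simp only [one_mul]
      exact onedim_mgf ψ₀ σ hσ cc hcc ν hnorm (θf i) (sf i) (dψ₀ (θf i))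
    calc ∏ i, mgf (V i) P 1
        = ∏ i, Real.exp ((ψ₀ (θf i + sf i) - ψ₀ (θf i) - sf i * dψ₀ (θf i)) / σ ^ 2) :=
          Finset.prod_congr rfl fun i _ => hfac i
      _ = Real.exp (∑ i, (ψ₀ (θf i + sf i) - ψ₀ (θf i) - sf i * dψ₀ (θf i)) / σ ^ 2) :=
          (Real.exp_sum _ _).symm
      _ = Real.exp ((1 / σ ^ 2) * ∑ i,
            (ψ₀ (∑ k, X i k * (βs k + b k)) - ψ₀ (θf i) - sf i * dψ₀ (θf i))) := by
          congr 1
          rw [Finset.mul_sum]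
          refine Finset.sum_congr rfl fun i _ => ?_
          have harg : θf i + sf i = ∑ k, X i k * (βs k + b k) := by
            rw [hθf, hsf]
            simp only [mul_add]
            rw [Finset.sum_add_distrib]
          rw [harg]
          ring
  refine ⟨hmain, ?_⟩
  intro M₁ ηstar hM₁ hηpos hpos hC b η₀ hη₀pos hη₀le hXb
  rw [hmain b, Real.exp_le_exp]
  set θf : Fin n → ℝ := fun i => ∑ k, X i k * βs k with hθf
  set sf : Fin n → ℝ := fun i => ∑ k, X i k * b k with hsf
  have key : ∀ i : Fin n,
      ψ₀ (∑ k, X i k * (βs k + b k)) - ψ₀ (θf i) - sf i * dψ₀ (θf i)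
        ≤ Real.exp η₀ * ddψ₀ (θf i) * sf i ^ 2 / 2 := by
    intro i
    have harg : (∑ k, X i k * (βs k + b k)) = θf i + sf i := by
      rw [hθf, hsf]
      simp only [mul_add]
      rw [Finset.sum_add_distrib]
    rw [harg]
    have := taylor_aux ψ₀ dψ₀ ddψ₀ hd1 hd2 (θf i) (sf i) (Real.exp η₀ * ddψ₀ (θf i)) ?_
    · exact this
    intro u hu
    have h1 : |sf i| ≤ ⨆ j, |∑ k, X j k * b k| := by
      rw [hsf]
      exact le_ciSup (f := fun j : Fin n => |∑ k, X j k * b k|) (Set.Finite.bddAbove (Set.finite_range _)) i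
    have h2 : M₁ * |u| ≤ η₀ :=
      le_trans (mul_le_mul_of_nonneg_left (hu.trans h1) hM₁) hXb
    have h3 : ((M₁ * |u| : ℝ) : EReal) ≤ ηstar :=
      le_trans (EReal.coe_le_coe_iff.2 h2) hη₀le
    obtain ⟨hp1, hp2⟩ := hC i u h3
    have hdd0 := hpos i
    have hlog : Real.log (ddψ₀ (θf i + u) / ddψ₀ (θf i)) ≤ η₀ :=
      le_trans (le_trans (le_abs_self _) hp2) h2
    have hratio : ddψ₀ (θf i + u) / ddψ₀ (θf i) ≤ Real.exp η₀ := by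
      rw [← Real.exp_log (div_pos hp1 hdd0)]
      exact Real.exp_le_exp.2 hlog
    calc ddψ₀ (θf i + u) = ddψ₀ (θf i + u) / ddψ₀ (θf i) * ddψ₀ (θf i) := by
          field_simp
          exact (mul_div_cancel_right₀ _ hdd0.ne').symm
      _ ≤ Real.exp η₀ * ddψ₀ (θf i) := mul_le_mul_of_nonneg_right hratio hdd0.le
  have hsum : ∑ i, (ψ₀ (∑ k, X i k * (βs k + b k)) - ψ₀ (θf i) - sf i * dψ₀ (θf i))
      ≤ ∑ i, Real.exp η₀ * ddψ₀ (θf i) * sf i ^ 2 / 2 :=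
    Finset.sum_le_sum fun i _ => key i
  have hrhs : (n:ℝ) * Real.exp η₀ * ((n:ℝ)⁻¹ * ∑ i, ddψ₀ (θf i) * sf i ^ 2) / (2 * σ ^ 2)
      = (1 / σ ^ 2) * ∑ i, Real.exp η₀ * ddψ₀ (θf i) * sf i ^ 2 / 2 := by
    have hs : ∑ i, Real.exp η₀ * ddψ₀ (θf i) * sf i ^ 2 / 2
        = Real.exp η₀ / 2 * ∑ i, ddψ₀ (θf i) * sf i ^ 2 := by
      rw [Finset.mul_sum]
      exact Finset.sum_congr rfl fun i _ => by ring
    rw [hs]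
    field_simp
  rw [hrhs]
  exact mul_le_mul_of_nonneg_left hsum (by positivity)
end

section
/- Assume the GLM loss, the GLM probability model, and condition (C) with constants M₁ ≥ 0 and 0 < η* ≤ ∞. Let S ⊆ {1,…,p} with S ⊇ {j : β*_j ≠ 0}, let w ∈ ℝ^p be deterministic with w_j > 0 for j ∉ S, assume Σ*_{jj} > 0 for all j, let λ₀ > 0, λ₁ > 0, and set t_j = λ₀ for j ∈ S and t_j = w_j λ₁ for j ∉ S. Suppose there are constants 0 < η₀ ≤ η* and ε₀ > 0 such that M₁ max_{1≤j≤p} ( |x_j|_∞ t_j / Σ*_{jj} ) ≤ η₀ e^{η₀} and Σ_{j=1}^p exp( − n t_j² e^{−η₀} / (2σ² Σ*_{jj}) ) ≤ ε₀/2, where x_j is the j-th column of X and |x_j|_∞ = max_i |x_{ij}|. Then P( z*₀ ≤ λ₀ and z*₁ ≤ λ₁ ) ≥ 1 − ε₀, where z*₀ = max_{j∈S} |(z − ψ̇(β*))_j| and z*₁ = max_{j∉S} |(z − ψ̇(β*))_j| / w_j. -/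
open MeasureTheory ProbabilityTheory

/-!
STATEMENT 7 (Lemma 2(i)): under condition (C) and the penalty-level conditions
(lm-2-cond-1), P(z*₀ ≤ λ₀ and z*₁ ≤ λ₁) ≥ 1 − ε₀.
-/

open Real
open scoped ENNReal NNReal

lemma aux_taylor (ψ₀ dψ₀ ddψ₀ : ℝ → ℝ)
    (hd1 : ∀ t, HasDerivAt ψ₀ (dψ₀ t) t)
    (hd2 : ∀ t, HasDerivAt dψ₀ (ddψ₀ t) t)
    (θ h C : ℝ) (hbd : ∀ u : ℝ, |u| ≤ |h| → ddψ₀ (θ + u) ≤ C) :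
    ψ₀ (θ + h) - ψ₀ θ - dψ₀ θ * h ≤ C * h ^ 2 / 2 := by
  set g : ℝ → ℝ := fun u => ψ₀ (θ + u) - ψ₀ θ - dψ₀ θ * u - C * u ^ 2 / 2 with hg
  set g' : ℝ → ℝ := fun u => dψ₀ (θ + u) - dψ₀ θ - C * u with hg'
  have hdg : ∀ u, HasDerivAt g (g' u) u := by
    intro u
    have h1 : HasDerivAt (fun u : ℝ => ψ₀ (θ + u)) (dψ₀ (θ + u)) u := by
      exact (hd1 (θ + u)).comp_const_add θ u
    have h2 : HasDerivAt (fun u : ℝ => ψ₀ θ + dψ₀ θ * u + C * u ^ 2 / 2)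
        (dψ₀ θ + C * u) u := by
      have hl := ((hasDerivAt_id u).const_mul (dψ₀ θ)).const_add (ψ₀ θ)
      have hq : HasDerivAt (fun u : ℝ => C * u ^ 2 / 2) (C * u) u := by
        have := ((hasDerivAt_pow 2 u).const_mul C).div_const 2
        simpa [mul_comm, mul_assoc, mul_div_assoc] using this
      have hl' : HasDerivAt (fun x : ℝ => ψ₀ θ + dψ₀ θ * x) (dψ₀ θ) u := by simpa using hl
      exact hl'.add hq
    rw [show g = fun v => ψ₀ (θ + v) - (ψ₀ θ + dψ₀ θ * v + C * v ^ 2 / 2) from by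
      funext v; simp [hg]; ring, show g' u = dψ₀ (θ + u) - (dψ₀ θ + C * u) from by
      simp [hg']; ring]
    exact h1.sub h2
  have hdg' : ∀ u, HasDerivAt g' (ddψ₀ (θ + u) - C) u := by
    intro u
    have h1 : HasDerivAt (fun u : ℝ => dψ₀ (θ + u)) (ddψ₀ (θ + u)) u := by
      exact (hd2 (θ + u)).comp_const_add θ u
    have h2 : HasDerivAt (fun u : ℝ => dψ₀ θ + C * u) C u := by
      simpa using ((hasDerivAt_id u).const_mul C).const_add (dψ₀ θ)
    rw [show g' = fun v => dψ₀ (θ + v) - (dψ₀ θ + C * v) from by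
      funext v; simp only [hg', sub_sub]]
    exact h1.sub h2
  have hg0 : g 0 = 0 := by simp [hg]
  have hg'0 : g' 0 = 0 := by simp [hg']
  have hcg : Continuous g := by
    exact continuous_iff_continuousAt.2 fun u => (hdg u).continuousAt
  have hcg' : Continuous g' := by
    exact continuous_iff_continuousAt.2 fun u => (hdg' u).continuousAt
  have key : g h ≤ 0 := by
    rcases lt_trichotomy h 0 with hneg | hzero | hpos
    · -- on [h, 0] : g' antitone, so g' u ≥ g' 0 = 0 for u ≤ 0, g monotone, g h ≤ g 0
      have habs : ∀ x ∈ Set.Icc h 0, |x| ≤ |h| := by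
        intro x hx
        rw [abs_le, abs_of_neg hneg]
        constructor <;> linarith [hx.1, hx.2]
      have hanti : AntitoneOn g' (Set.Icc h 0) := by
        apply antitoneOn_of_deriv_nonpos (convex_Icc h 0) hcg'.continuousOn
          (fun x _ => (hdg' x).differentiableAt.differentiableWithinAt)
        intro x hx
        rw [interior_Icc] at hx
        rw [(hdg' x).deriv]
        have := hbd x (habs x ⟨hx.1.le, hx.2.le⟩)
        linarith
      have hg'nonneg : ∀ x ∈ Set.Icc h 0, 0 ≤ g' x := by
        intro x hx
        have := hanti hx (Set.right_mem_Icc.2 hneg.le) hx.2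
        rw [hg'0] at this; exact this
      have hmono : MonotoneOn g (Set.Icc h 0) := by
        apply monotoneOn_of_deriv_nonneg (convex_Icc h 0) hcg.continuousOn
          (fun x _ => (hdg x).differentiableAt.differentiableWithinAt)
        intro x hx
        rw [interior_Icc] at hx
        rw [(hdg x).deriv]
        exact hg'nonneg x ⟨hx.1.le, hx.2.le⟩
      have := hmono (Set.left_mem_Icc.2 hneg.le) (Set.right_mem_Icc.2 hneg.le) hneg.le
      rw [hg0] at this; exact this
    · simp [hzero, hg0]
    · have habs : ∀ x ∈ Set.Icc 0 h, |x| ≤ |h| := by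
        intro x hx
        rw [abs_le, abs_of_pos hpos]
        constructor <;> linarith [hx.1, hx.2]
      have hanti : AntitoneOn g' (Set.Icc 0 h) := by
        apply antitoneOn_of_deriv_nonpos (convex_Icc 0 h) hcg'.continuousOn
          (fun x _ => (hdg' x).differentiableAt.differentiableWithinAt)
        intro x hx
        rw [interior_Icc] at hx
        rw [(hdg' x).deriv]
        have := hbd x (habs x ⟨hx.1.le, hx.2.le⟩)
        linarith
      have hg'nonpos : ∀ x ∈ Set.Icc 0 h, g' x ≤ 0 := by
        intro x hx
        have := hanti (Set.left_mem_Icc.2 hpos.le) hx hx.1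
        rw [hg'0] at this; exact this
      have hmono : AntitoneOn g (Set.Icc 0 h) := by
        apply antitoneOn_of_deriv_nonpos (convex_Icc 0 h) hcg.continuousOn
          (fun x _ => (hdg x).differentiableAt.differentiableWithinAt)
        intro x hx
        rw [interior_Icc] at hx
        rw [(hdg x).deriv]
        exact hg'nonpos x ⟨hx.1.le, hx.2.le⟩
      have := hmono (Set.left_mem_Icc.2 hpos.le) (Set.right_mem_Icc.2 hpos.le) hpos.le
      rw [hg0] at this; exact this
  simp only [hg] at key
  linarith

lemma aux_chernoff {Ω : Type} {mΩ : MeasurableSpace Ω} (P : Measure Ω)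
    [IsProbabilityMeasure P] {n : ℕ} (y : Ω → Fin n → ℝ)
    (hmeas : ∀ i, Measurable fun ω => y ω i)
    (hindep : iIndepFun (fun i ω => y ω i) P)
    (a b : Fin n → ℝ) (l : ℝ) (hl : 0 ≤ l)
    (hint : ∀ i, Integrable (fun ω => Real.exp (l * (a i * y ω i))) P)
    (hmgf : ∀ i, ∫ ω, Real.exp (l * (a i * y ω i)) ∂P ≤ Real.exp (b i))
    (ε K : ℝ) (hKe : -l * ε + ∑ i, b i ≤ K) :
    (P {ω | ε ≤ ∑ i, a i * y ω i}).toReal ≤ Real.exp K := by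
  classical
  set Z : Fin n → Ω → ℝ := fun i ω => a i * y ω i with hZ
  have hZmeas : ∀ i, Measurable (Z i) := fun i => (hmeas i).const_mul (a i)
  have hZindep : iIndepFun Z P := by
    have := hindep.comp (fun i (x : ℝ) => a i * x) (fun i => measurable_const_mul (a i))
    exact this
  have hintZ : ∀ i ∈ Finset.univ, Integrable (fun ω => Real.exp (l * Z i ω)) P :=
    fun i _ => hint i
  have hintsum : Integrable (fun ω => Real.exp (l * (∑ i, Z i) ω)) P :=
    hZindep.integrable_exp_mul_sum hZmeas hintZ
  have hset : {ω | ε ≤ ∑ i, a i * y ω i} = {ω | ε ≤ (∑ i, Z i) ω} := by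
    ext ω; simp [hZ, Finset.sum_apply]
  rw [hset]
  calc (P {ω | ε ≤ (∑ i, Z i) ω}).toReal
      ≤ Real.exp (-l * ε) * mgf (∑ i, Z i) P l :=
        measure_ge_le_exp_mul_mgf ε hl hintsum
    _ ≤ Real.exp (-l * ε) * ∏ i, Real.exp (b i) := by
        rw [hZindep.mgf_sum hZmeas]
        refine mul_le_mul_of_nonneg_left ?_ (Real.exp_nonneg _)
        exact Finset.prod_le_prod (fun i _ => mgf_nonneg) (fun i _ => hmgf i)
    _ ≤ Real.exp K := by
        rw [← Real.exp_sum, ← Real.exp_add]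
        exact Real.exp_le_exp.2 hKe

lemma aux_mgf {Ω : Type} {mΩ : MeasurableSpace Ω} (P : Measure Ω)
    [IsProbabilityMeasure P] (ψ₀ : ℝ → ℝ) (σ : ℝ) (hσ : 0 < σ)
    (cc : ℝ → ℝ) (hcc : Measurable cc) (ν : Measure ℝ) [SigmaFinite ν]
    (hnorm : ∀ θ : ℝ, ∫ v, Real.exp ((θ * v - ψ₀ θ) / σ ^ 2 + cc v / σ ^ 2) ∂ν = 1)
    (Y : Ω → ℝ) (hY : Measurable Y) (θ : ℝ)
    (hlawY : Measure.map Y P = ν.withDensity (fun v => ENNReal.ofReal (Real.exp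
        ((θ * v - ψ₀ θ) / σ ^ 2 + cc v / σ ^ 2)))) (s : ℝ) :
    Integrable (fun ω => Real.exp (s * Y ω)) P ∧
    ∫ ω, Real.exp (s * Y ω) ∂P = Real.exp ((ψ₀ (θ + s * σ ^ 2) - ψ₀ θ) / σ ^ 2) := by
  have hσ2 : (σ : ℝ) ^ 2 ≠ 0 := by positivity
  set θ' : ℝ := θ + s * σ ^ 2 with hθ'
  set ρ : ℝ → ℝ := fun v => Real.exp ((θ * v - ψ₀ θ) / σ ^ 2 + cc v / σ ^ 2) with hρ
  have hρmeas : Measurable ρ := by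
    apply Measurable.exp
    exact (((measurable_id.const_mul θ).sub measurable_const).div_const _).add
      (hcc.div_const _)
  have hintν : ∀ t : ℝ, Integrable
      (fun v => Real.exp ((t * v - ψ₀ t) / σ ^ 2 + cc v / σ ^ 2)) ν := by
    intro t
    by_contra hcon
    have := hnorm t
    rw [integral_undef hcon] at this
    norm_num at this
  have hfun : (fun v => Real.exp (s * v) * ρ v) =
      fun v => Real.exp ((ψ₀ θ' - ψ₀ θ) / σ ^ 2) *
        Real.exp ((θ' * v - ψ₀ θ') / σ ^ 2 + cc v / σ ^ 2) := by
    funext v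
    rw [← Real.exp_add, ← Real.exp_add]
    congr 1
    field_simp
    ring
  have hintmap : Integrable (fun v => Real.exp (s * v)) (Measure.map Y P) := by
    rw [hlawY]
    rw [integrable_withDensity_iff (hρmeas.ennreal_ofReal)
      (Filter.Eventually.of_forall fun v => ENNReal.ofReal_lt_top)]
    have : (fun v => Real.exp (s * v) * (ENNReal.ofReal (ρ v)).toReal) =
        (fun v => Real.exp (s * v) * ρ v) := by
      funext v; rw [ENNReal.toReal_ofReal (Real.exp_nonneg _)]
    rw [this, hfun]
    exact (hintν θ').const_mul _
  have hexpmeas : AEStronglyMeasurable (fun v => Real.exp (s * v)) (Measure.map Y P) :=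
    (measurable_id.const_mul s).exp.aestronglyMeasurable
  constructor
  · have := (integrable_map_measure hexpmeas hY.aemeasurable).mp hintmap
    exact this
  · rw [← integral_map hY.aemeasurable hexpmeas, hlawY]
    have hwd : ν.withDensity (fun v => ENNReal.ofReal (ρ v)) =
        ν.withDensity (fun v => ((ρ v).toNNReal : ℝ≥0∞)) := rfl
    rw [hwd, integral_withDensity_eq_integral_smul hρmeas.real_toNNReal]
    have : (fun v => (ρ v).toNNReal • Real.exp (s * v)) =
        fun v => Real.exp ((ψ₀ θ' - ψ₀ θ) / σ ^ 2) *
          Real.exp ((θ' * v - ψ₀ θ') / σ ^ 2 + cc v / σ ^ 2) := by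
      funext v
      rw [NNReal.smul_def, smul_eq_mul, Real.coe_toNNReal _ (Real.exp_nonneg _),
        mul_comm]
      exact congrFun hfun v
    rw [this, integral_const_mul, hnorm θ', mul_one]

lemma aux_one_tail {Ω : Type} {mΩ : MeasurableSpace Ω} (P : Measure Ω)
    [IsProbabilityMeasure P] {n : ℕ} (hn : 1 ≤ n) (y : Ω → Fin n → ℝ)
    (hmeas : ∀ i, Measurable fun ω => y ω i)
    (hindep : iIndepFun (fun i ω => y ω i) P)
    (ψ₀ dψ₀ ddψ₀ : ℝ → ℝ)
    (hd1 : ∀ t, HasDerivAt ψ₀ (dψ₀ t) t)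
    (hd2 : ∀ t, HasDerivAt dψ₀ (ddψ₀ t) t)
    (σ : ℝ) (hσ : 0 < σ) (cc : ℝ → ℝ) (hcc : Measurable cc)
    (ν : Measure ℝ) [SigmaFinite ν]
    (hnorm : ∀ θ : ℝ, ∫ v, Real.exp ((θ * v - ψ₀ θ) / σ ^ 2 + cc v / σ ^ 2) ∂ν = 1)
    (θi : Fin n → ℝ)
    (hlaw : ∀ i, Measure.map (fun ω => y ω i) P =
        ν.withDensity (fun v => ENNReal.ofReal (Real.exp
          ((θi i * v - ψ₀ (θi i)) / σ ^ 2 + cc v / σ ^ 2))))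
    (M₁ η₀ : ℝ) (hM₁ : 0 ≤ M₁) (hη₀ : 0 < η₀)
    (hDpos : ∀ i, 0 < ddψ₀ (θi i))
    (hCexp : ∀ i, ∀ u : ℝ, M₁ * |u| ≤ η₀ →
        ddψ₀ (θi i + u) ≤ ddψ₀ (θi i) * Real.exp η₀)
    (a : Fin n → ℝ) (t Sig : ℝ) (ht : 0 < t) (hSig : 0 < Sig)
    (hSigeq : ∑ i, ddψ₀ (θi i) * a i ^ 2 = (n : ℝ) * Sig)
    (hconstr : ∀ i, M₁ * (|a i| * t / Sig) ≤ η₀ * Real.exp η₀) :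
    P {ω | (n : ℝ) * t ≤ ∑ i, a i * (y ω i - dψ₀ (θi i))} ≤
      ENNReal.ofReal (Real.exp (-((n : ℝ) * t ^ 2 * Real.exp (-η₀)) /
        (2 * σ ^ 2 * Sig))) := by
  classical
  have hσ2 : (0 : ℝ) < σ ^ 2 := by positivity
  have hE : (0 : ℝ) < Real.exp η₀ := Real.exp_pos _
  set l : ℝ := t * Real.exp (-η₀) / (σ ^ 2 * Sig) with hl
  have hlpos : 0 < l := by
    apply div_pos (mul_pos ht (Real.exp_pos _)) (mul_pos hσ2 hSig)
  -- constraint on M₁ |l a_i σ²|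
  have hM : ∀ i, M₁ * |l * a i * σ ^ 2| ≤ η₀ := by
    intro i
    have e1 : |l * a i * σ ^ 2| = l * σ ^ 2 * |a i| := by
      rw [abs_mul, abs_mul, abs_of_nonneg hlpos.le, abs_of_nonneg hσ2.le]; ring
    have e2 : l * σ ^ 2 = t * Real.exp (-η₀) / Sig := by
      rw [hl]; field_simp
    have e3 : M₁ * |l * a i * σ ^ 2| =
        M₁ * (|a i| * t / Sig) * Real.exp (-η₀) := by
      rw [e1, e2]; field_simp
    rw [e3]
    calc M₁ * (|a i| * t / Sig) * Real.exp (-η₀)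
        ≤ η₀ * Real.exp η₀ * Real.exp (-η₀) := by
          apply mul_le_mul_of_nonneg_right (hconstr i) (Real.exp_nonneg _)
      _ = η₀ := by rw [mul_assoc, ← Real.exp_add]; simp
  -- mgf exponent per i
  set b : Fin n → ℝ :=
    fun i => (ψ₀ (θi i + l * a i * σ ^ 2) - ψ₀ (θi i)) / σ ^ 2 with hb
  have hmgf_i : ∀ i, Integrable (fun ω => Real.exp (l * (a i * y ω i))) P ∧
      ∫ ω, Real.exp (l * (a i * y ω i)) ∂P = Real.exp (b i) := by
    intro i
    have := aux_mgf P ψ₀ σ hσ cc hcc ν hnorm (fun ω => y ω i) (hmeas i) (θi i)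
      (hlaw i) (l * a i)
    simp only [mul_assoc] at this
    refine ⟨this.1, ?_⟩
    rw [this.2, hb]
    congr 2
    ring_nf
  -- bound on b i
  have hbbd : ∀ i, b i ≤ l * (a i * dψ₀ (θi i)) +
      l ^ 2 * a i ^ 2 * σ ^ 2 * (ddψ₀ (θi i) * Real.exp η₀) / 2 := by
    intro i
    have htay := aux_taylor ψ₀ dψ₀ ddψ₀ hd1 hd2 (θi i) (l * a i * σ ^ 2)
      (ddψ₀ (θi i) * Real.exp η₀) ?_
    · rw [hb, div_le_iff₀ hσ2]
      have heq : (l * (a i * dψ₀ (θi i)) +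
          l ^ 2 * a i ^ 2 * σ ^ 2 * (ddψ₀ (θi i) * Real.exp η₀) / 2) * σ ^ 2
          = dψ₀ (θi i) * (l * a i * σ ^ 2) +
            (ddψ₀ (θi i) * Real.exp η₀) * (l * a i * σ ^ 2) ^ 2 / 2 := by ring
      rw [heq]
      linarith
    · intro u hu
      apply hCexp i u
      calc M₁ * |u| ≤ M₁ * |l * a i * σ ^ 2| := by
            apply mul_le_mul_of_nonneg_left hu hM₁
        _ ≤ η₀ := hM i
  -- sum bound and final exponent
  set K : ℝ := -((n : ℝ) * t ^ 2 * Real.exp (-η₀)) / (2 * σ ^ 2 * Sig) with hK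
  set ε : ℝ := (n : ℝ) * t + ∑ i, a i * dψ₀ (θi i) with hε
  have hKe : -l * ε + ∑ i, b i ≤ K := by
    have hsum : ∑ i, b i ≤ l * (∑ i, a i * dψ₀ (θi i)) +
        l ^ 2 * σ ^ 2 * Real.exp η₀ * ((n : ℝ) * Sig) / 2 := by
      calc ∑ i, b i ≤ ∑ i, (l * (a i * dψ₀ (θi i)) +
          l ^ 2 * a i ^ 2 * σ ^ 2 * (ddψ₀ (θi i) * Real.exp η₀) / 2) :=
            Finset.sum_le_sum fun i _ => hbbd i
        _ = l * (∑ i, a i * dψ₀ (θi i)) +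
            l ^ 2 * σ ^ 2 * Real.exp η₀ * (∑ i, ddψ₀ (θi i) * a i ^ 2) / 2 := by
            rw [Finset.sum_add_distrib, Finset.mul_sum, Finset.mul_sum]
            congr 1
            rw [Finset.sum_div]
            apply Finset.sum_congr rfl
            intro i _
            ring
        _ = l * (∑ i, a i * dψ₀ (θi i)) +
            l ^ 2 * σ ^ 2 * Real.exp η₀ * ((n : ℝ) * Sig) / 2 := by rw [hSigeq]
    have heq : -l * ε + (l * (∑ i, a i * dψ₀ (θi i)) +
        l ^ 2 * σ ^ 2 * Real.exp η₀ * ((n : ℝ) * Sig) / 2) = K := by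
      rw [hε, hK, hl]
      have hexp : Real.exp (-η₀) = (Real.exp η₀)⁻¹ := by
        rw [← Real.exp_neg]
      rw [hexp]
      field_simp
      ring
    exact le_of_le_of_eq (add_le_add_right hsum (-l * ε)) heq
  -- apply Chernoff
  have hcher := aux_chernoff P y hmeas hindep a b l hlpos.le
    (fun i => (hmgf_i i).1) (fun i => le_of_eq (hmgf_i i).2) ε K hKe
  have hset : {ω | (n : ℝ) * t ≤ ∑ i, a i * (y ω i - dψ₀ (θi i))} =
      {ω | ε ≤ ∑ i, a i * y ω i} := by
    ext ω
    simp only [Set.mem_setOf_eq, mul_sub, Finset.sum_sub_distrib, hε]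
    constructor <;> intro h <;> linarith
  rw [hset]
  rw [ENNReal.le_ofReal_iff_toReal_le (measure_ne_top P _) (Real.exp_nonneg _)]
  exact hcher

theorem stmt_7 (n p : ℕ) (hn : 1 ≤ n) (hp : 1 ≤ p)
    (X : Fin n → Fin p → ℝ)
    (ψ₀ dψ₀ ddψ₀ : ℝ → ℝ)
    (hψ₀conv : ConvexOn ℝ Set.univ ψ₀)
    (hd1 : ∀ t, HasDerivAt ψ₀ (dψ₀ t) t)
    (hd2 : ∀ t, HasDerivAt dψ₀ (ddψ₀ t) t)
    (βs : Fin p → ℝ)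
    (M₁ : ℝ) (ηstar : EReal) (hM₁ : 0 ≤ M₁) (hηstar : (0 : EReal) < ηstar)
    -- condition (C)
    (hC0 : ∀ i, 0 < ddψ₀ (∑ k, X i k * βs k))
    (hC : ∀ i, ∀ t : ℝ, ((M₁ * |t| : ℝ) : EReal) ≤ ηstar →
        0 < ddψ₀ (∑ k, X i k * βs k + t) ∧
        |Real.log (ddψ₀ (∑ k, X i k * βs k + t) / ddψ₀ (∑ k, X i k * βs k))| ≤ M₁ * |t|)
    -- the GLM probability model
    (σ : ℝ) (hσ : 0 < σ)
    (cc : ℝ → ℝ) (hcc : Measurable cc)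
    (ν : Measure ℝ) [SigmaFinite ν]
    (hnorm : ∀ θ : ℝ,
        ∫ v, Real.exp ((θ * v - ψ₀ θ) / σ ^ 2 + cc v / σ ^ 2) ∂ν = 1)
    (Ω : Type) (mΩ : MeasurableSpace Ω) (P : Measure Ω) [IsProbabilityMeasure P]
    (y : Ω → Fin n → ℝ) (hmeas : ∀ i, Measurable fun ω => y ω i)
    (hindep : iIndepFun (fun i ω => y ω i) P)
    (hlaw : ∀ i, Measure.map (fun ω => y ω i) P =
        ν.withDensity (fun v => ENNReal.ofReal (Real.exp
          (((∑ k, X i k * βs k) * v - ψ₀ (∑ k, X i k * βs k)) / σ ^ 2 + cc v / σ ^ 2))))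
    -- the sparse set, deterministic weights, and penalty levels
    (S : Finset (Fin p)) (hS : ∀ j, βs j ≠ 0 → j ∈ S)
    (w : Fin p → ℝ) (hw : ∀ j, 0 ≤ w j) (hwpos : ∀ j ∉ S, 0 < w j)
    (lam0 lam1 : ℝ) (hlam0 : 0 < lam0) (hlam1 : 0 < lam1)
    -- the diagonal entries of Σ* are positive
    (hSigjj : ∀ j, 0 < (n : ℝ)⁻¹ * ∑ i, ddψ₀ (∑ k, X i k * βs k) * X i j ^ 2)
    -- (lm-2-cond-1)
    (η₀ ε₀ : ℝ) (hη₀ : 0 < η₀) (hη₀star : ((η₀ : ℝ) : EReal) ≤ ηstar) (hε₀ : 0 < ε₀)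
    (hcond1 : ∀ j, M₁ * ((⨆ i, |X i j|) * (if j ∈ S then lam0 else w j * lam1) /
        ((n : ℝ)⁻¹ * ∑ i, ddψ₀ (∑ k, X i k * βs k) * X i j ^ 2)) ≤ η₀ * Real.exp η₀)
    (hcond2 : ∑ j, Real.exp (-((n : ℝ) * (if j ∈ S then lam0 else w j * lam1) ^ 2 *
          Real.exp (-η₀)) /
        (2 * σ ^ 2 * ((n : ℝ)⁻¹ * ∑ i, ddψ₀ (∑ k, X i k * βs k) * X i j ^ 2))) ≤ ε₀ / 2) :
    ENNReal.ofReal (1 - ε₀) ≤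
      P {ω | (∀ j ∈ S,
          |(n : ℝ)⁻¹ * ∑ i, X i j * y ω i -
            (n : ℝ)⁻¹ * ∑ i, X i j * dψ₀ (∑ k, X i k * βs k)| ≤ lam0) ∧
        ∀ j ∉ S,
          |(n : ℝ)⁻¹ * ∑ i, X i j * y ω i -
            (n : ℝ)⁻¹ * ∑ i, X i j * dψ₀ (∑ k, X i k * βs k)| / w j ≤ lam1} := by
  classical
  have hnpos : (0 : ℝ) < (n : ℝ) := by exact_mod_cast hn
  have hnne : (n : ℝ) ≠ 0 := hnpos.ne'
  -- notation
  set θi : Fin n → ℝ := fun i => ∑ k, X i k * βs k with hθi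
  have httpos : ∀ j : Fin p, 0 < (if j ∈ S then lam0 else w j * lam1) := by
    intro j
    split_ifs with hj
    · exact hlam0
    · exact mul_pos (hwpos j hj) hlam1
  -- bound on second derivative from condition (C)
  have hCexp : ∀ i, ∀ u : ℝ, M₁ * |u| ≤ η₀ →
      ddψ₀ (θi i + u) ≤ ddψ₀ (θi i) * Real.exp η₀ := by
    intro i u hu
    have hle : ((M₁ * |u| : ℝ) : EReal) ≤ ηstar :=
      le_trans (EReal.coe_le_coe_iff.2 hu) hη₀star
    obtain ⟨hpos, hlog⟩ := hC i u hle
    have h1 : Real.log (ddψ₀ (θi i + u) / ddψ₀ (θi i)) ≤ η₀ :=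
      le_trans (le_abs_self _) (le_trans hlog hu)
    have h2 : ddψ₀ (θi i + u) / ddψ₀ (θi i) ≤ Real.exp η₀ :=
      (Real.log_le_iff_le_exp (div_pos hpos (hC0 i))).1 h1
    rwa [div_le_iff₀ (hC0 i), mul_comm (Real.exp η₀)] at h2
  -- supremum bound on columns
  have hsupX : ∀ j i, |X i j| ≤ ⨆ i', |X i' j| := by
    intro j i
    exact le_ciSup (f := fun i' => |X i' j|) (Set.Finite.bddAbove (Set.finite_range _)) i
  -- the key one-sided tail bound
  have key : ∀ j : Fin p, ∀ a : Fin n → ℝ, (∀ i, a i ^ 2 = X i j ^ 2) →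
      (∀ i, |a i| ≤ ⨆ i', |X i' j|) →
      P {ω | (n : ℝ) * (if j ∈ S then lam0 else w j * lam1) ≤
          ∑ i, a i * (y ω i - dψ₀ (θi i))} ≤
        ENNReal.ofReal (Real.exp
          (-((n : ℝ) * (if j ∈ S then lam0 else w j * lam1) ^ 2 * Real.exp (-η₀)) /
          (2 * σ ^ 2 * ((n : ℝ)⁻¹ * ∑ i, ddψ₀ (θi i) * X i j ^ 2)))) := by
    intro j a ha1 ha2
    apply aux_one_tail P hn y hmeas hindep ψ₀ dψ₀ ddψ₀ hd1 hd2 σ hσ cc hcc ν hnorm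
      θi hlaw M₁ η₀ hM₁ hη₀ hC0 hCexp a _ _ (httpos j) (hSigjj j)
    · -- hSigeq
      rw [← mul_assoc, mul_inv_cancel₀ hnne, one_mul]
      exact Finset.sum_congr rfl fun i _ => by rw [ha1 i]
    · -- hconstr
      intro i
      refine le_trans ?_ (hcond1 j)
      have hSigpos := hSigjj j
      have httj := httpos j
      gcongr
      exact ha2 i
  -- events
  set tt : Fin p → ℝ := fun j => if j ∈ S then lam0 else w j * lam1 with htt
  set W : Fin p → Ω → ℝ := fun j ω => ∑ i, X i j * (y ω i - dψ₀ (θi i)) with hW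
  set U : Fin p → Set Ω := fun j => {ω | (n : ℝ) * tt j ≤ W j ω} with hU
  set Dn : Fin p → Set Ω := fun j => {ω | (n : ℝ) * tt j ≤ -W j ω} with hDn
  set V : Fin p → Ω → ℝ := fun j ω => (n : ℝ)⁻¹ * ∑ i, X i j * y ω i -
      (n : ℝ)⁻¹ * ∑ i, X i j * dψ₀ (θi i) with hV
  set G : Set Ω := {ω | (∀ j ∈ S, |V j ω| ≤ lam0) ∧
      ∀ j ∉ S, |V j ω| / w j ≤ lam1} with hG
  have hVW : ∀ j ω, V j ω = (n : ℝ)⁻¹ * W j ω := by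
    intro j ω
    rw [hV, hW]
    simp only
    rw [← mul_sub, ← Finset.sum_sub_distrib]
    congr 1
    exact Finset.sum_congr rfl fun i _ => (mul_sub _ _ _).symm
  have habsV : ∀ j ω, |V j ω| = (n : ℝ)⁻¹ * |W j ω| := by
    intro j ω
    rw [hVW, abs_mul, abs_of_pos (inv_pos.2 hnpos)]
  -- measurability of G
  have hVmeas : ∀ j : Fin p, Measurable (V j) := by
    intro j
    apply Measurable.sub
    · exact (Finset.measurable_sum Finset.univ fun i _ =>
        (hmeas i).const_mul (X i j)).const_mul _
    · exact measurable_const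
  have hGmeas : MeasurableSet G := by
    have hGi : G = ⋂ j : Fin p,
        {ω | if j ∈ S then |V j ω| ≤ lam0 else |V j ω| / w j ≤ lam1} := by
      ext ω
      simp only [hG, Set.mem_iInter, Set.mem_setOf_eq]
      constructor
      · rintro ⟨h1, h2⟩ j
        by_cases hj : j ∈ S
        · rw [if_pos hj]; exact h1 j hj
        · rw [if_neg hj]; exact h2 j hj
      · intro h
        constructor
        · intro j hj; have := h j; rwa [if_pos hj] at this
        · intro j hj; have := h j; rwa [if_neg hj] at this
    rw [hGi]
    apply MeasurableSet.iInter
    intro j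
    by_cases hj : j ∈ S
    · simp only [if_pos hj]
      exact measurableSet_le (hVmeas j).abs measurable_const
    · simp only [if_neg hj]
      exact measurableSet_le ((hVmeas j).abs.div_const _) measurable_const
  -- complement inclusion
  have hsub : Gᶜ ⊆ ⋃ j : Fin p, (U j ∪ Dn j) := by
    intro ω hω
    simp only [hG, Set.mem_compl_iff, Set.mem_setOf_eq, not_and_or] at hω
    have main : ∃ j : Fin p, (n : ℝ) * tt j < |W j ω| := by
      rcases hω with h | h
      · push_neg at h
        obtain ⟨j, hjS, hlt⟩ := h
        refine ⟨j, ?_⟩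
        rw [habsV] at hlt
        have h2 : (n : ℝ) * lam0 < (n : ℝ) * ((n : ℝ)⁻¹ * |W j ω|) :=
          (mul_lt_mul_iff_right₀ hnpos).2 hlt
        rw [← mul_assoc, mul_inv_cancel₀ hnne, one_mul] at h2
        have httj : tt j = lam0 := by rw [htt]; simp only [if_pos hjS]
        rw [httj]
        exact h2
      · push_neg at h
        obtain ⟨j, hjS, hlt⟩ := h
        refine ⟨j, ?_⟩
        have hlt2 : w j * lam1 < |V j ω| := by
          have := (lt_div_iff₀ (hwpos j hjS)).1 hlt
          linarith [this]
        rw [habsV] at hlt2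
        have h2 : (n : ℝ) * (w j * lam1) < (n : ℝ) * ((n : ℝ)⁻¹ * |W j ω|) :=
          (mul_lt_mul_iff_right₀ hnpos).2 hlt2
        have h3 : (n : ℝ) * ((n : ℝ)⁻¹ * |W j ω|) = |W j ω| := by
          field_simp
        rw [h3] at h2
        have httj : tt j = w j * lam1 := by rw [htt]; simp only [if_neg hjS]
        rw [httj]
        exact h2
    obtain ⟨j, hj⟩ := main
    apply Set.mem_iUnion.2
    refine ⟨j, ?_⟩
    rcases abs_cases (W j ω) with ⟨heq, _⟩ | ⟨heq, _⟩
    · left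
      rw [hU]
      simp only [Set.mem_setOf_eq]
      rw [heq] at hj
      exact hj.le
    · right
      rw [hDn]
      simp only [Set.mem_setOf_eq]
      rw [heq] at hj
      exact hj.le
  -- tail bounds
  have hPU : ∀ j : Fin p, P (U j) ≤ ENNReal.ofReal (Real.exp
      (-((n : ℝ) * tt j ^ 2 * Real.exp (-η₀)) /
      (2 * σ ^ 2 * ((n : ℝ)⁻¹ * ∑ i, ddψ₀ (θi i) * X i j ^ 2)))) := by
    intro j
    exact key j (fun i => X i j) (fun i => rfl) (fun i => hsupX j i)
  have hPDn : ∀ j : Fin p, P (Dn j) ≤ ENNReal.ofReal (Real.exp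
      (-((n : ℝ) * tt j ^ 2 * Real.exp (-η₀)) /
      (2 * σ ^ 2 * ((n : ℝ)⁻¹ * ∑ i, ddψ₀ (θi i) * X i j ^ 2)))) := by
    intro j
    have hDneq : Dn j = {ω | (n : ℝ) * tt j ≤
        ∑ i, (fun i => -X i j) i * (y ω i - dψ₀ (θi i))} := by
      rw [hDn]
      ext ω
      simp only [Set.mem_setOf_eq, hW, neg_mul, Finset.sum_neg_distrib]
    rw [hDneq]
    exact key j (fun i => -X i j) (fun i => by ring)
      (fun i => by rw [abs_neg]; exact hsupX j i)
  -- union bound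
  have hunion : P Gᶜ ≤ ENNReal.ofReal ε₀ := by
    calc P Gᶜ ≤ P (⋃ j : Fin p, (U j ∪ Dn j)) := measure_mono hsub
      _ ≤ ∑' j : Fin p, P (U j ∪ Dn j) := measure_iUnion_le _
      _ = ∑ j : Fin p, P (U j ∪ Dn j) := tsum_fintype _
      _ ≤ ∑ j : Fin p, ENNReal.ofReal (2 * Real.exp
          (-((n : ℝ) * tt j ^ 2 * Real.exp (-η₀)) /
          (2 * σ ^ 2 * ((n : ℝ)⁻¹ * ∑ i, ddψ₀ (θi i) * X i j ^ 2)))) := by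
          apply Finset.sum_le_sum
          intro j _
          calc P (U j ∪ Dn j) ≤ P (U j) + P (Dn j) := measure_union_le _ _
            _ ≤ _ + _ := add_le_add (hPU j) (hPDn j)
            _ = ENNReal.ofReal (2 * Real.exp
                (-((n : ℝ) * tt j ^ 2 * Real.exp (-η₀)) /
                (2 * σ ^ 2 * ((n : ℝ)⁻¹ * ∑ i, ddψ₀ (θi i) * X i j ^ 2)))) := by
                rw [← ENNReal.ofReal_add (Real.exp_nonneg _) (Real.exp_nonneg _)]
                congr 1
                ring
      _ = ENNReal.ofReal (∑ j : Fin p, 2 * Real.exp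
          (-((n : ℝ) * tt j ^ 2 * Real.exp (-η₀)) /
          (2 * σ ^ 2 * ((n : ℝ)⁻¹ * ∑ i, ddψ₀ (θi i) * X i j ^ 2)))) :=
          (ENNReal.ofReal_sum_of_nonneg fun j _ => by positivity).symm
      _ ≤ ENNReal.ofReal ε₀ := by
          apply ENNReal.ofReal_le_ofReal
          rw [← Finset.mul_sum]
          have h2 : ∑ j : Fin p, Real.exp
              (-((n : ℝ) * tt j ^ 2 * Real.exp (-η₀)) /
              (2 * σ ^ 2 * ((n : ℝ)⁻¹ * ∑ i, ddψ₀ (θi i) * X i j ^ 2))) ≤ ε₀ / 2 :=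
            hcond2
          linarith
  -- conclude
  have huniv : P G + P Gᶜ = 1 := by
    rw [measure_add_measure_compl hGmeas, measure_univ]
  have hone : (1 : ℝ≥0∞) ≤ P G + ENNReal.ofReal ε₀ := by
    calc (1 : ℝ≥0∞) = P G + P Gᶜ := huniv.symm
      _ ≤ P G + ENNReal.ofReal ε₀ := add_le_add_right hunion _
  show ENNReal.ofReal (1 - ε₀) ≤ P G
  calc ENNReal.ofReal (1 - ε₀) = ENNReal.ofReal 1 - ENNReal.ofReal ε₀ :=
        ENNReal.ofReal_sub 1 hε₀.le
    _ = 1 - ENNReal.ofReal ε₀ := by rw [ENNReal.ofReal_one]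
    _ ≤ P G := tsub_le_iff_right.2 hone
end

section
/- Let X ∈ ℝ^{n×p} have rows x^1,…,x^n, let ψ(β) = n^{-1} Σ_{i=1}^n log(1 + exp(x^i β)) with gradient ψ̇(β) = n^{-1} Σ_i (x^i)' π_i(β), where π_i(β) = exp(x^iβ)/(1 + exp(x^iβ)). Then for all β, β* ∈ ℝ^p, ⟨β − β*, ψ̇(β) − ψ̇(β*)⟩ = n^{-1} Σ_{i=1}^n [ K(π_i(β*), π_i(β)) + K(π_i(β), π_i(β*)) ], i.e., the symmetrized Bregman divergence of the logistic loss equals the average symmetrized Kullback–Leibler divergence between the fitted Bernoulli probabilities. -/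
/-!
STATEMENT 19 (logistic regression): the symmetrized Bregman divergence of the logistic
loss equals the average symmetrized Kullback–Leibler divergence between the fitted
Bernoulli probabilities.
-/

/-- Kullback–Leibler information between Bernoulli probabilities. -/
noncomputable def bernoulliKL (a b : ℝ) : ℝ :=
  a * Real.log (a / b) + (1 - a) * Real.log ((1 - a) / (1 - b))

/-- Logistic probability π_i(β) = exp(x^iβ)/(1+exp(x^iβ)). -/
noncomputable def logisticProb {n p : ℕ} (X : Fin n → Fin p → ℝ) (β : Fin p → ℝ)
    (i : Fin n) : ℝ :=
  Real.exp (∑ k, X i k * β k) / (1 + Real.exp (∑ k, X i k * β k))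


private lemma sigma_symKL (s t : ℝ) :
    bernoulliKL (Real.exp s / (1 + Real.exp s)) (Real.exp t / (1 + Real.exp t)) +
    bernoulliKL (Real.exp t / (1 + Real.exp t)) (Real.exp s / (1 + Real.exp s)) =
    (t - s) * (Real.exp t / (1 + Real.exp t) - Real.exp s / (1 + Real.exp s)) := by
  have hs : (0:ℝ) < 1 + Real.exp s := by positivity
  have ht : (0:ℝ) < 1 + Real.exp t := by positivity
  have h1s : 1 - Real.exp s / (1 + Real.exp s) = 1 / (1 + Real.exp s) := by field_simp; ring
  have h1t : 1 - Real.exp t / (1 + Real.exp t) = 1 / (1 + Real.exp t) := by field_simp; ring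
  have las : Real.log (Real.exp s / (1 + Real.exp s)) = s - Real.log (1 + Real.exp s) := by
    rw [Real.log_div (Real.exp_ne_zero s) hs.ne', Real.log_exp]
  have lat : Real.log (Real.exp t / (1 + Real.exp t)) = t - Real.log (1 + Real.exp t) := by
    rw [Real.log_div (Real.exp_ne_zero t) ht.ne', Real.log_exp]
  have lbs : Real.log (1 / (1 + Real.exp s)) = -Real.log (1 + Real.exp s) := by
    rw [Real.log_div one_ne_zero hs.ne', Real.log_one]; ring
  have lbt : Real.log (1 / (1 + Real.exp t)) = -Real.log (1 + Real.exp t) := by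
    rw [Real.log_div one_ne_zero ht.ne', Real.log_one]; ring
  have aspos : (0:ℝ) < Real.exp s / (1 + Real.exp s) := by positivity
  have atpos : (0:ℝ) < Real.exp t / (1 + Real.exp t) := by positivity
  have bspos : (0:ℝ) < 1 / (1 + Real.exp s) := by positivity
  have btpos : (0:ℝ) < 1 / (1 + Real.exp t) := by positivity
  unfold bernoulliKL
  rw [h1s, h1t, Real.log_div aspos.ne' atpos.ne', Real.log_div atpos.ne' aspos.ne',
      Real.log_div bspos.ne' btpos.ne', Real.log_div btpos.ne' bspos.ne',
      las, lat, lbs, lbt]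
  field_simp
  ring

theorem stmt_19 (n p : ℕ) (hn : 1 ≤ n) (hp : 1 ≤ p)
    (X : Fin n → Fin p → ℝ) (β βs : Fin p → ℝ) :
    ∑ j, (β j - βs j) *
        ((n : ℝ)⁻¹ * ∑ i, X i j * logisticProb X β i -
         (n : ℝ)⁻¹ * ∑ i, X i j * logisticProb X βs i) =
    (n : ℝ)⁻¹ * ∑ i,
        (bernoulliKL (logisticProb X βs i) (logisticProb X β i) +
         bernoulliKL (logisticProb X β i) (logisticProb X βs i)) := by
  have key : ∀ i : Fin n,
      bernoulliKL (logisticProb X βs i) (logisticProb X β i) +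
      bernoulliKL (logisticProb X β i) (logisticProb X βs i) =
      ((∑ k, X i k * β k) - ∑ k, X i k * βs k) *
        (logisticProb X β i - logisticProb X βs i) := fun i =>
    sigma_symKL (∑ k, X i k * βs k) (∑ k, X i k * β k)
  have lhs_eq : ∑ j, (β j - βs j) *
        ((n : ℝ)⁻¹ * ∑ i, X i j * logisticProb X β i -
         (n : ℝ)⁻¹ * ∑ i, X i j * logisticProb X βs i) =
      ∑ j, ∑ i, (n:ℝ)⁻¹ * ((β j - βs j) * X i j *
        (logisticProb X β i - logisticProb X βs i)) := by
    refine Finset.sum_congr rfl fun j _ => ?_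
    rw [← mul_sub, ← Finset.sum_sub_distrib, Finset.mul_sum, Finset.mul_sum]
    exact Finset.sum_congr rfl fun i _ => by ring
  rw [lhs_eq, Finset.sum_comm, Finset.mul_sum]
  refine Finset.sum_congr rfl fun i _ => ?_
  rw [key i, ← Finset.sum_sub_distrib, Finset.sum_mul, Finset.mul_sum]
  exact Finset.sum_congr rfl fun k _ => by ring
end
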